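/- arXiv:2107.02587 — 3 statements merged into one kernel-verified Lean document; each statement's English description precedes it below -/
import Mathlib

section
/- The generalized Baire space κ^κ is homeomorphic to the subspace {x ∈ 2^κ : for every α < κ there is β ≥ α with x(β) = 1} of the generalized Cantor space 2^κ. -/
universe u v

open Cardinal Set

namespace GDST

/-- A *limit element* of an order: an element with some predecessor but
no immediate predecessor (i.e. it sits at a limit position). -/
def IsLimitElt {α : Type v} [LT α] (a : α) : Prop :=
  (∃ b, b < a) ∧ ∀ b, b < a → ∃ c, b < c ∧ c < a

/-- The space `X` has weight at most `κ`: it admits a topological basis of cardinality ≤ κ. -/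
def HasWeightLE (κ : Cardinal.{u}) (X : Type u) [TopologicalSpace X] : Prop :=
  ∃ B : Set (Set X), TopologicalSpace.IsTopologicalBasis B ∧ #B ≤ κ

/-- `X` is `κ`-additive: intersections of fewer than `κ` open sets are open. -/
def KAdditive (κ : Cardinal.{u}) (X : Type u) [TopologicalSpace X] : Prop :=
  ∀ S : Set (Set X), #S < κ → (∀ U ∈ S, IsOpen U) → IsOpen (⋂₀ S)

/-- `X` is `κ`-Lindelöf: every open cover has a subcover of size `< κ`. -/
def KLindelof (κ : Cardinal.{u}) (X : Type u) [TopologicalSpace X] : Prop :=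
  ∀ 𝒰 : Set (Set X), (∀ U ∈ 𝒰, IsOpen U) → ⋃₀ 𝒰 = Set.univ →
    ∃ 𝒱 ⊆ 𝒰, #𝒱 < κ ∧ ⋃₀ 𝒱 = Set.univ

/-- `X` is `κ`-perfect: no point `x` is `κ`-isolated, i.e. no `{x}` is an intersection
of fewer than `κ` open sets. -/
def KPerfect (κ : Cardinal.{u}) (X : Type u) [TopologicalSpace X] : Prop :=
  ∀ x : X, ¬ ∃ S : Set (Set X), #S < κ ∧ (∀ U ∈ S, IsOpen U) ∧ ⋂₀ S = {x}

/-- `A` is `G_δ^κ` in `X`: an intersection of `κ`-many open sets. -/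
def IsGDeltaKappa (κ : Cardinal.{u}) {X : Type u} [TopologicalSpace X] (A : Set X) : Prop :=
  ∃ U : κ.ord.ToType → Set X, (∀ i, IsOpen (U i)) ∧ A = ⋂ i, U i

/-! ### Generalized Baire and Cantor spaces -/

/-- The bounded topology on `ι → A`: generated by the sets of functions with a
prescribed restriction to a proper initial segment `{b | b < a}` of `ι`. -/
def BoundedTopology (ι : Type u) [LinearOrder ι] (A : Type v) : TopologicalSpace (ι → A) :=
  TopologicalSpace.generateFrom
    {U | ∃ (a : ι) (y : ι → A), U = {x : ι → A | ∀ b, b < a → x b = y b}}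

/-- The generalized Baire space `κ^κ`. -/
def GenBaire (κ : Cardinal.{u}) : Type u := κ.ord.ToType → κ.ord.ToType

noncomputable instance (κ : Cardinal.{u}) : TopologicalSpace (GenBaire κ) :=
  BoundedTopology κ.ord.ToType κ.ord.ToType

/-- The generalized Cantor space `2^κ`. -/
def GenCantor (κ : Cardinal.{u}) : Type u := κ.ord.ToType → Bool

noncomputable instance (κ : Cardinal.{u}) : TopologicalSpace (GenCantor κ) :=
  BoundedTopology κ.ord.ToType Bool

/-! ### The strong and fair (strong) κ-Choquet games -/

/-- A transfinite sequence of moves of player I: at each round a pair `(U, x)`. -/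
abbrev IMoves (κ : Cardinal.{u}) (X : Type u) : Type u := κ.ord.ToType → Set X × X

/-- A strategy for player II: given the moves of I (only the moves up to the current
round may be used, see `IsIIStrategy`) and the current round, produce II's move. -/
abbrev Strategy (κ : Cardinal.{u}) (X : Type u) : Type u := IMoves κ X → κ.ord.ToType → Set X

/-- The intersection of the sets played before round `a`. -/
def InterBelow {ι : Type u} {X : Type u} [LT ι] (V : ι → Set X) (a : ι) : Set X :=
  ⋂ b, ⋂ (_ : b < a), V b

/-- `U` is relatively open in `T`. -/
def RelOpenIn {X : Type u} [TopologicalSpace X] (T U : Set X) : Prop :=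
  ∃ W : Set X, IsOpen W ∧ U = W ∩ T

/-- Player I's move at round `a` is legal: `(f a).1` is a nonempty relatively open subset of
the intersection of all previously played sets, and the point `(f a).2` belongs to it. -/
def LegalI {κ : Cardinal.{u}} {X : Type u} [TopologicalSpace X]
    (σ : Strategy κ X) (f : IMoves κ X) (a : κ.ord.ToType) : Prop :=
  RelOpenIn (InterBelow (σ f) a) (f a).1 ∧ (f a).2 ∈ (f a).1

/-- Player II's answer (by `σ`) at round `a` is legal: it is relatively open in the
intersection of all previously played sets, contains I's point, and is contained in I's set. -/
def LegalII {κ : Cardinal.{u}} {X : Type u} [TopologicalSpace X]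
    (σ : Strategy κ X) (f : IMoves κ X) (a : κ.ord.ToType) : Prop :=
  RelOpenIn (InterBelow (σ f) a) (σ f a) ∧ (f a).2 ∈ σ f a ∧ σ f a ⊆ (f a).1

/-- All moves before round `a` were legal. -/
def LegalBelow {κ : Cardinal.{u}} {X : Type u} [TopologicalSpace X]
    (σ : Strategy κ X) (f : IMoves κ X) (a : κ.ord.ToType) : Prop :=
  ∀ b, b < a → LegalI σ f b ∧ LegalII σ f b

/-- `σ` only depends on the moves of I played so far. -/
def IsIIStrategy {κ : Cardinal.{u}} {X : Type u} (σ : Strategy κ X) : Prop :=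
  ∀ f g : IMoves κ X, ∀ a, (∀ b, b ≤ a → f b = g b) → σ f a = σ g a

/-- `σ` is a winning strategy for player II in the strong κ-Choquet game `G^s_κ(X)`:
it answers legally to legal positions, and in any (possibly partial) legal run the
intersection of the played sets at every limit round—including the final one—is nonempty. -/
def WinningStrong {κ : Cardinal.{u}} {X : Type u} [TopologicalSpace X]
    (σ : Strategy κ X) : Prop :=
  IsIIStrategy σ ∧
  (∀ f a, LegalBelow σ f a → LegalI σ f a → LegalII σ f a) ∧
  (∀ f a, IsLimitElt a → LegalBelow σ f a → (InterBelow (σ f) a).Nonempty) ∧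
  (∀ f, (∀ a, LegalI σ f a ∧ LegalII σ f a) → (⋂ a, σ f a).Nonempty)

/-- `σ` is a winning strategy for player II in the fair strong κ-Choquet game `fG^s_κ(X)`:
it answers legally to legal positions, and for every legal run either the intersection of
the played sets is empty at some limit round `< κ`, or the final intersection is nonempty. -/
def WinningFair {κ : Cardinal.{u}} {X : Type u} [TopologicalSpace X]
    (σ : Strategy κ X) : Prop :=
  IsIIStrategy σ ∧
  (∀ f a, LegalBelow σ f a → LegalI σ f a → LegalII σ f a) ∧
  (∀ f, (∀ a, LegalI σ f a ∧ LegalII σ f a) →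
    (∃ a, IsLimitElt a ∧ InterBelow (σ f) a = ∅) ∨ (⋂ a, σ f a).Nonempty)

/-- `X` is a strong κ-Choquet space. -/
def SCSpace (κ : Cardinal.{u}) (X : Type u) [TopologicalSpace X] : Prop :=
  HasWeightLE κ X ∧ ∃ σ : Strategy κ X, WinningStrong σ

/-- `X` is a strongly fair κ-Choquet space. -/
def fSCSpace (κ : Cardinal.{u}) (X : Type u) [TopologicalSpace X] : Prop :=
  HasWeightLE κ X ∧ ∃ σ : Strategy κ X, WinningFair σ

/-! ### Trees on κ -/

/-- Sequences of length `< κ` with values in `κ`, encoded as pairs `(a, x)` representing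
the restriction of `x : κ → κ` to the initial segment `{b | b < a}`. -/
abbrev TreeSeq (κ : Cardinal.{u}) : Type u := κ.ord.ToType × (κ.ord.ToType → κ.ord.ToType)

/-- `T` is a tree on `κ`: membership of `(a, x)` only depends on the restriction of `x`
below `a` (so that `T` really is a set of `<κ`-sequences), and `T` is closed under
initial segments. -/
def IsTreeOn (κ : Cardinal.{u}) (T : Set (TreeSeq κ)) : Prop :=
  (∀ a, ∀ x y : κ.ord.ToType → κ.ord.ToType,
      (∀ b, b < a → x b = y b) → ((a, x) ∈ T ↔ (a, y) ∈ T)) ∧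
  (∀ a x, (a, x) ∈ T → ∀ b, b ≤ a → (b, x) ∈ T)

/-- The body `[T]` of a tree `T` on `κ`. -/
def TreeBody (κ : Cardinal.{u}) (T : Set (TreeSeq κ)) : Set (GenBaire κ) :=
  {x | ∀ a, (a, x) ∈ T}

/-- `T` is pruned: every element has extensions in `T` of every length `< κ`. -/
def TreePruned (κ : Cardinal.{u}) (T : Set (TreeSeq κ)) : Prop :=
  ∀ a x, (a, x) ∈ T → ∀ c, a ≤ c → ∃ y, (∀ b, b < a → y b = x b) ∧ (c, y) ∈ T

/-- `T` is `<κ`-closed: a limit-length sequence all of whose proper initial segments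
lie in `T` lies in `T`. -/
def TreeLtClosed (κ : Cardinal.{u}) (T : Set (TreeSeq κ)) : Prop :=
  ∀ a, IsLimitElt a → ∀ x, (∀ b, b < a → (b, x) ∈ T) → (a, x) ∈ T

/-- `T` is superclosed: a pruned and `<κ`-closed tree. -/
def IsSuperclosedTree (κ : Cardinal.{u}) (T : Set (TreeSeq κ)) : Prop :=
  IsTreeOn κ T ∧ TreePruned κ T ∧ TreeLtClosed κ T

/-- A subset of the generalized Baire space is superclosed if it is the body of a
superclosed tree. -/
def IsSuperclosedSet (κ : Cardinal.{u}) (C : Set (GenBaire κ)) : Prop :=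
  ∃ T : Set (TreeSeq κ), IsSuperclosedTree κ T ∧ C = TreeBody κ T

/-- The `a`-th level of a tree `T` on `κ`. -/
def TreeLev (κ : Cardinal.{u}) (T : Set (TreeSeq κ)) (a : κ.ord.ToType) :
    Set ({b : κ.ord.ToType // b < a} → κ.ord.ToType) :=
  {s | ∃ x, (a, x) ∈ T ∧ ∀ b : {b : κ.ord.ToType // b < a}, x b.1 = s b}

/-- κ has the tree property: every tree on κ all of whose levels are nonempty of size `< κ`
has a (cofinal) branch. -/
def TreeProperty (κ : Cardinal.{u}) : Prop :=
  ∀ T : Set (TreeSeq κ), IsTreeOn κ T →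
    (∀ a, (TreeLev κ T a).Nonempty ∧ #(TreeLev κ T a) < κ) →
    ∃ x : κ.ord.ToType → κ.ord.ToType, ∀ a, (a, x) ∈ T

/-- κ is (strongly) inaccessible. -/
def Inaccessible (κ : Cardinal.{u}) : Prop :=
  ℵ₀ < κ ∧ κ.IsRegular ∧ ∀ μ : Cardinal.{u}, μ < κ → (2 : Cardinal.{u}) ^ μ < κ

/-- κ is weakly compact: inaccessible with the tree property. -/
def WeaklyCompact (κ : Cardinal.{u}) : Prop := Inaccessible κ ∧ TreeProperty κ

/-! ### κ-Borel sets -/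

/-- The κ-Borel subsets of a topological space: the smallest family containing the open
sets and closed under complements and unions of at most κ-many sets. -/
inductive KBorel (κ : Cardinal.{u}) {X : Type u} [TopologicalSpace X] : Set X → Prop
  | of_isOpen (U : Set X) : IsOpen U → KBorel κ U
  | compl (S : Set X) : KBorel κ S → KBorel κ Sᶜ
  | iUnion (ι : Type u) (f : ι → Set X) : #ι ≤ κ → (∀ i, KBorel κ (f i)) → KBorel κ (⋃ i, f i)

/-! ### 𝔾-metric spaces -/

section GMetric

variable (G : Type u) [AddCommGroup G] [LinearOrder G] [IsOrderedAddMonoid G]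

/-- The positive cone of `G` has coinitiality `κ`: there is a coinitial set of positive
elements of size `≤ κ`, and no such set of size `< κ`. -/
def HasDegree (κ : Cardinal.{u}) : Prop :=
  (∃ S : Set G, (∀ ε ∈ S, 0 < ε) ∧ (∀ δ : G, 0 < δ → ∃ ε ∈ S, ε ≤ δ) ∧ #S ≤ κ) ∧
  (∀ S : Set G, (∀ ε ∈ S, 0 < ε) → (∀ δ : G, 0 < δ → ∃ ε ∈ S, ε ≤ δ) → κ ≤ #S)

variable {G}

/-- `d` is a `𝔾`-metric on `X`. -/
structure IsGMetric {X : Type u} (d : X → X → G) : Prop where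
  nonneg : ∀ x y, 0 ≤ d x y
  eq_zero_iff : ∀ x y, d x y = 0 ↔ x = y
  symm : ∀ x y, d x y = d y x
  triangle : ∀ x y z, d x z ≤ d x y + d y z

/-- The open ball of center `x` and radius `ε`. -/
def GBall {X : Type u} (d : X → X → G) (x : X) (ε : G) : Set X := {y | d x y < ε}

/-- The topology induced by a `𝔾`-metric. -/
def GMetricTopology {X : Type u} (d : X → X → G) : TopologicalSpace X :=
  TopologicalSpace.generateFrom {U | ∃ x ε, 0 < ε ∧ U = GBall d x ε}

/-- The `𝔾`-metric `d` is compatible with the topology of `X`. -/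
def GCompatible {X : Type u} [t : TopologicalSpace X] (d : X → X → G) : Prop :=
  GMetricTopology d = t

/-- A `κ`-sequence is `d`-Cauchy. -/
def GCauchy (κ : Cardinal.{u}) {X : Type u} (d : X → X → G) (x : κ.ord.ToType → X) : Prop :=
  ∀ ε : G, 0 < ε → ∃ a, ∀ b, a ≤ b → ∀ c, a ≤ c → d (x b) (x c) < ε

/-- A `κ`-sequence `d`-converges to `y`. -/
def GConvergesTo (κ : Cardinal.{u}) {X : Type u} (d : X → X → G)
    (x : κ.ord.ToType → X) (y : X) : Prop :=
  ∀ ε : G, 0 < ε → ∃ a, ∀ b, a ≤ b → d (x b) y < ε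

/-- `d` is Cauchy-complete: every `d`-Cauchy `κ`-sequence converges. -/
def GCauchyComplete (κ : Cardinal.{u}) {X : Type u} (d : X → X → G) : Prop :=
  ∀ x : κ.ord.ToType → X, GCauchy κ d x → ∃ y, GConvergesTo κ d x y

/-- `X` is `𝔾`-metrizable: it admits a compatible `𝔾`-metric. -/
def GMetrizable (G : Type u) [AddCommGroup G] [LinearOrder G] [IsOrderedAddMonoid G]
    (X : Type u) [TopologicalSpace X] : Prop :=
  ∃ d : X → X → G, IsGMetric d ∧ GCompatible d

/-- `X` is `𝔾`-Polish: it has weight `≤ κ` and admits a compatible Cauchy-complete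
`𝔾`-metric. -/
def GPolish (G : Type u) [AddCommGroup G] [LinearOrder G] [IsOrderedAddMonoid G] (κ : Cardinal.{u})
    (X : Type u) [TopologicalSpace X] : Prop :=
  HasWeightLE κ X ∧ ∃ d : X → X → G, IsGMetric d ∧ GCompatible d ∧ GCauchyComplete κ d

/-- `d` is spherically complete: every (nonempty) ⊆-decreasing transfinite sequence of open
`d`-balls has nonempty intersection. -/
def SphericallyComplete {X : Type u} (d : X → X → G) : Prop :=
  ∀ o : Ordinal.{u}, o ≠ 0 → ∀ c : o.ToType → Set X,
    (∀ i, ∃ x ε, 0 < ε ∧ c i = GBall d x ε) →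
    (∀ i j, i ≤ j → c j ⊆ c i) → (⋂ i, c i).Nonempty

/-- `d` is spherically `<κ`-complete: every (nonempty) ⊆-decreasing sequence of open
`d`-balls of length `< κ` has nonempty intersection. -/
def SphericallyLtComplete (κ : Cardinal.{u}) {X : Type u} (d : X → X → G) : Prop :=
  ∀ o : Ordinal.{u}, o ≠ 0 → o < κ.ord → ∀ c : o.ToType → Set X,
    (∀ i, ∃ x ε, 0 < ε ∧ c i = GBall d x ε) →
    (∀ i j, i ≤ j → c j ⊆ c i) → (⋂ i, c i).Nonempty

/-- `X` is a spherically complete `𝔾`-Polish space. -/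
def GPolishSphericallyComplete (G : Type u) [AddCommGroup G] [LinearOrder G] [IsOrderedAddMonoid G] (κ : Cardinal.{u})
    (X : Type u) [TopologicalSpace X] : Prop :=
  HasWeightLE κ X ∧
    ∃ d : X → X → G, IsGMetric d ∧ GCompatible d ∧ GCauchyComplete κ d ∧ SphericallyComplete d

/-- `X` is a spherically `<κ`-complete `𝔾`-Polish space. -/
def GPolishSphericallyLtComplete (G : Type u) [AddCommGroup G] [LinearOrder G] [IsOrderedAddMonoid G] (κ : Cardinal.{u})
    (X : Type u) [TopologicalSpace X] : Prop :=
  HasWeightLE κ X ∧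
    ∃ d : X → X → G, IsGMetric d ∧ GCompatible d ∧ GCauchyComplete κ d ∧
      SphericallyLtComplete κ d

end GMetric

/-! ### κ-Borel spaces -/

/-- `ℬ` is a `κ⁺`-algebra on `X`: closed under complements and unions of at most
κ-many sets. -/
def IsKplusAlgebra (κ : Cardinal.{u}) {X : Type u} (ℬ : Set (Set X)) : Prop :=
  (∀ S ∈ ℬ, Sᶜ ∈ ℬ) ∧
  (∀ (ι : Type u) (f : ι → Set X), #ι ≤ κ → (∀ i, f i ∈ ℬ) → (⋃ i, f i) ∈ ℬ)

/-- `ℬ` separates the points of `X`. -/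
def SepPoints {X : Type u} (ℬ : Set (Set X)) : Prop :=
  ∀ x y : X, x ≠ y → ∃ S ∈ ℬ, x ∈ S ∧ y ∉ S

/-- `(X, ℬ)` is a κ-Borel space: a `κ⁺`-algebra that separates points and is generated
(as a `κ⁺`-algebra) by a subfamily of size `≤ κ`. -/
def IsKBorelSpace (κ : Cardinal.{u}) {X : Type u} (ℬ : Set (Set X)) : Prop :=
  IsKplusAlgebra κ ℬ ∧ SepPoints ℬ ∧
    ∃ 𝒢 ⊆ ℬ, #𝒢 ≤ κ ∧
      ∀ ℬ' : Set (Set X), IsKplusAlgebra κ ℬ' → 𝒢 ⊆ ℬ' → ℬ ⊆ ℬ'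

/-- The restriction `ℬ↾A` of a family of subsets of `X` to `A ⊆ X`. -/
def RestrictFam {X : Type u} (ℬ : Set (Set X)) (A : Set X) : Set (Set ↥A) :=
  {T | ∃ S ∈ ℬ, T = Subtype.val ⁻¹' S}

/-- The family of κ-Borel sets of a topological space. -/
def KBorelFam (κ : Cardinal.{u}) (X : Type u) [TopologicalSpace X] : Set (Set X) :=
  {S | KBorel κ S}

/-- `e` is a κ-Borel isomorphism between `(X, ℬ)` and `(Y, 𝒞)`: a bijection under which
images and preimages of distinguished sets are distinguished. -/
def IsKBorelSpaceIso {X Y : Type u} (ℬ : Set (Set X)) (𝒞 : Set (Set Y)) (e : X ≃ Y) : Prop :=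
  (∀ S ∈ ℬ, e '' S ∈ 𝒞) ∧ (∀ S ∈ 𝒞, e ⁻¹' S ∈ ℬ)

/-- `(X, ℬ)` is a standard κ-Borel space: it is a κ-Borel space which is κ-Borel isomorphic
to a κ-Borel subset of the generalized Baire space (with the restricted κ-Borel structure). -/
def IsStandardKBorel (κ : Cardinal.{u}) {X : Type u} (ℬ : Set (Set X)) : Prop :=
  IsKBorelSpace κ ℬ ∧
    ∃ B₀ : Set (GenBaire κ), KBorel κ B₀ ∧
      ∃ e : X ≃ ↥B₀, IsKBorelSpaceIso ℬ (RestrictFam (KBorelFam κ (GenBaire κ)) B₀) e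

open Ordinal

namespace Stmt1Aux

noncomputable def sseq (x : Ordinal.{u} → Ordinal.{u}) (α : Ordinal.{u}) : Ordinal.{u} :=
  Ordinal.blsub α (fun β _ => sseq x β + x β)
termination_by α
decreasing_by assumption

lemma sseq_def (x : Ordinal.{u} → Ordinal.{u}) (α : Ordinal.{u}) :
    sseq x α = Ordinal.blsub α (fun β _ => sseq x β + x β) := by
  rw [sseq]

noncomputable def tval (x : Ordinal.{u} → Ordinal.{u}) (α : Ordinal.{u}) : Ordinal.{u} :=
  sseq x α + x α

lemma tval_lt_sseq {β α : Ordinal.{u}} (h : β < α) (x : Ordinal.{u} → Ordinal.{u}) :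
    tval x β < sseq x α := by
  rw [sseq_def]; exact Ordinal.lt_blsub _ β h

lemma sseq_strictMono (x : Ordinal.{u} → Ordinal.{u}) : StrictMono (sseq x) :=
  fun _ _ h => lt_of_le_of_lt (le_self_add) (tval_lt_sseq h x)

lemma tval_strictMono (x : Ordinal.{u} → Ordinal.{u}) : StrictMono (tval x) :=
  fun _ _ h => lt_of_lt_of_le (tval_lt_sseq h x) (le_self_add)

lemma sseq_congr {x y : Ordinal.{u} → Ordinal.{u}} :
    ∀ α, (∀ β < α, x β = y β) → sseq x α = sseq y α := by
  intro α
  induction α using Ordinal.induction with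
  | h α IH =>
    intro hxy
    rw [sseq_def, sseq_def]
    congr 1
    funext β hβ
    rw [IH β hβ (fun γ hγ => hxy γ (hγ.trans hβ)), hxy β hβ]

lemma sseq_lt_ord {κ : Cardinal.{u}} (hreg : κ.IsRegular) {x : Ordinal.{u} → Ordinal.{u}}
    (hx : ∀ β, x β < κ.ord) : ∀ α < κ.ord, sseq x α < κ.ord := by
  intro α
  induction α using Ordinal.induction with
  | h α IH =>
    intro hα
    rw [sseq_def]
    refine Cardinal.blsub_lt_ord_of_isRegular hreg (Cardinal.lt_ord.mp hα) ?_
    intro β hβ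
    exact (Ordinal.isPrincipal_add_ord hreg.aleph0_le) (IH β hβ (hβ.trans hα)) (hx β)

lemma tval_lt_ord {κ : Cardinal.{u}} (hreg : κ.IsRegular) {x : Ordinal.{u} → Ordinal.{u}}
    (hx : ∀ β, x β < κ.ord) : ∀ α < κ.ord, tval x α < κ.ord := fun α hα =>
  (Ordinal.isPrincipal_add_ord hreg.aleph0_le) (sseq_lt_ord hreg hx α hα) (hx α)


noncomputable def tseq (P : Set Ordinal.{u}) (α : Ordinal.{u}) : Ordinal.{u} :=
  sInf {γ | γ ∈ P ∧ ∀ β, ∀ _ : β < α, tseq P β < γ}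
termination_by α
decreasing_by assumption

def Qset (P : Set Ordinal.{u}) (α : Ordinal.{u}) : Set Ordinal.{u} :=
  {γ | γ ∈ P ∧ ∀ β, β < α → tseq P β < γ}

lemma tseq_eq (P : Set Ordinal.{u}) (α : Ordinal.{u}) : tseq P α = sInf (Qset P α) := by
  rw [tseq]; rfl

section
variable {κ : Cardinal.{u}} (hreg : κ.IsRegular) {P : Set Ordinal.{u}}
  (hPlt : ∀ γ ∈ P, γ < κ.ord) (hPcof : ∀ γ < κ.ord, ∃ δ ∈ P, γ ≤ δ)

include hreg hPlt hPcof

lemma tseq_spec : ∀ α < κ.ord, tseq P α ∈ Qset P α := by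
  intro α
  induction α using Ordinal.induction with
  | h α IH =>
    intro hα
    have hne : (Qset P α).Nonempty := by
      have hb : Ordinal.blsub α (fun β _ => tseq P β) < κ.ord :=
        Cardinal.blsub_lt_ord_of_isRegular hreg (Cardinal.lt_ord.mp hα)
          (fun β hβ => hPlt _ (IH β hβ (hβ.trans hα)).1)
      obtain ⟨δ, hδP, hδ⟩ := hPcof _ hb
      exact ⟨δ, hδP, fun β hβ => lt_of_lt_of_le (Ordinal.lt_blsub _ β hβ) hδ⟩
    rw [tseq_eq]
    exact csInf_mem hne

lemma tseq_lt_ord : ∀ α < κ.ord, tseq P α < κ.ord := fun α hα =>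
  hPlt _ (tseq_spec hreg hPlt hPcof α hα).1

lemma tseq_lt_tseq {β α : Ordinal.{u}} (hβ : β < α) (hα : α < κ.ord) :
    tseq P β < tseq P α := (tseq_spec hreg hPlt hPcof α hα).2 β hβ

lemma le_tseq : ∀ α < κ.ord, α ≤ tseq P α := by
  intro α
  induction α using Ordinal.induction with
  | h α IH =>
    intro hα
    by_contra hc
    push_neg at hc
    exact absurd (tseq_lt_tseq hreg hPlt hPcof hc hα)
      ((IH _ hc (hc.trans hα)).not_gt)

lemma tseq_surj {γ : Ordinal.{u}} (hγ : γ ∈ P) : ∃ α, α < κ.ord ∧ tseq P α = γ := by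
  have hγO : γ < κ.ord := hPlt γ hγ
  have hAne : {β | β < κ.ord ∧ γ ≤ tseq P β}.Nonempty :=
    ⟨γ, hγO, le_tseq hreg hPlt hPcof γ hγO⟩
  set α := sInf {β | β < κ.ord ∧ γ ≤ tseq P β} with hαdef
  have hαA : α ∈ {β | β < κ.ord ∧ γ ≤ tseq P β} := csInf_mem hAne
  have hlow : ∀ β < α, tseq P β < γ := by
    intro β hβ
    have hnm : β ∉ {β | β < κ.ord ∧ γ ≤ tseq P β} := fun hm => (csInf_le' hm).not_gt hβ
    have hβO : β < κ.ord := hβ.trans hαA.1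
    by_contra hcc
    exact hnm ⟨hβO, le_of_not_gt hcc⟩
  have h1 : tseq P α ≤ γ := by
    rw [tseq_eq]
    exact csInf_le' ⟨hγ, hlow⟩
  exact ⟨α, hαA.1, le_antisymm h1 hαA.2⟩

lemma tseq_congr {P' : Set Ordinal.{u}} {δ : Ordinal.{u}}
    (hagree : ∀ γ < δ, (γ ∈ P ↔ γ ∈ P')) :
    ∀ α < κ.ord, tseq P α < δ → tseq P' α = tseq P α := by
  intro α
  induction α using Ordinal.induction with
  | h α IH =>
    intro hα hδ
    have hIH : ∀ β < α, tseq P' β = tseq P β := fun β hβ =>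
      IH β hβ (hβ.trans hα) ((tseq_lt_tseq hreg hPlt hPcof hβ hα).trans hδ)
    have hspec := tseq_spec hreg hPlt hPcof α hα
    have h1 : tseq P' α ≤ tseq P α := by
      rw [tseq_eq]
      refine csInf_le' ⟨(hagree _ hδ).mp hspec.1, fun β hβ => ?_⟩
      rw [hIH β hβ]; exact hspec.2 β hβ
    have h2 : tseq P α ≤ tseq P' α := by
      have hne' : (Qset P' α).Nonempty := by
        refine ⟨tseq P α, (hagree _ hδ).mp hspec.1, fun β hβ => ?_⟩
        rw [hIH β hβ]; exact hspec.2 β hβ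
      have hmem : tseq P' α ∈ Qset P' α := by rw [tseq_eq]; exact csInf_mem hne'
      have hlt : tseq P' α < δ := h1.trans_lt hδ
      rw [tseq_eq]
      refine csInf_le' ⟨(hagree _ hlt).mpr hmem.1, fun β hβ => ?_⟩
      rw [← hIH β hβ]; exact hmem.2 β hβ
    exact le_antisymm h1 h2

end
def tvalSet (κ : Cardinal.{u}) (x : Ordinal.{u} → Ordinal.{u}) : Set Ordinal.{u} :=
  {γ | ∃ α, α < κ.ord ∧ γ = tval x α}

section
variable {κ : Cardinal.{u}} (hreg : κ.IsRegular) {x : Ordinal.{u} → Ordinal.{u}}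
  (hx : ∀ β, x β < κ.ord)

include hreg hx

lemma tvalSet_lt : ∀ γ ∈ tvalSet κ x, γ < κ.ord := by
  rintro γ ⟨α, hα, rfl⟩
  exact tval_lt_ord hreg hx α hα

lemma tseq_tvalSet : ∀ α < κ.ord, tseq (tvalSet κ x) α = tval x α := by
  intro α
  induction α using Ordinal.induction with
  | h α IH =>
    intro hα
    have hmem : tval x α ∈ Qset (tvalSet κ x) α := by
      refine ⟨⟨α, hα, rfl⟩, fun β hβ => ?_⟩
      rw [IH β hβ (hβ.trans hα)]
      exact tval_strictMono x hβ
    have h1 : tseq (tvalSet κ x) α ≤ tval x α := by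
      rw [tseq_eq]; exact csInf_le' hmem
    have h2 : tval x α ≤ tseq (tvalSet κ x) α := by
      rw [tseq_eq]
      refine le_csInf ⟨_, hmem⟩ ?_
      rintro γ ⟨⟨η, hη, rfl⟩, hgt⟩
      rcases lt_or_ge η α with h | h
      · exact absurd (hgt η h) (by rw [IH η h (h.trans hα)]; exact lt_irrefl _)
      · exact (tval_strictMono x).monotone h
    exact le_antisymm h1 h2

end

noncomputable def useq (P : Set Ordinal.{u}) (α : Ordinal.{u}) : Ordinal.{u} :=
  tseq P α - Ordinal.blsub α (fun β _ => tseq P β)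

section
variable {κ : Cardinal.{u}} (hreg : κ.IsRegular) {P : Set Ordinal.{u}}
  (hPlt : ∀ γ ∈ P, γ < κ.ord) (hPcof : ∀ γ < κ.ord, ∃ δ ∈ P, γ ≤ δ)

include hreg hPlt hPcof

lemma blsub_tseq_le {α : Ordinal.{u}} (hα : α < κ.ord) :
    Ordinal.blsub α (fun β _ => tseq P β) ≤ tseq P α :=
  Ordinal.blsub_le_iff.mpr (fun β hβ => tseq_lt_tseq hreg hPlt hPcof hβ hα)

lemma useq_lt_ord : ∀ α < κ.ord, useq P α < κ.ord := fun α hα =>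
  (Ordinal.sub_le_self _ _).trans_lt (tseq_lt_ord hreg hPlt hPcof α hα)

lemma tval_useq : ∀ α < κ.ord, tval (useq P) α = tseq P α := by
  intro α
  induction α using Ordinal.induction with
  | h α IH =>
    intro hα
    have hfun : (fun (β : Ordinal.{u}) (hβ : β < α) => sseq (useq P) β + useq P β)
        = fun β _ => tseq P β := by
      funext β hβ
      exact IH β hβ (hβ.trans hα)
    have hs : sseq (useq P) α = Ordinal.blsub α (fun β _ => tseq P β) := by
      rw [sseq_def, hfun]
    show sseq (useq P) α + useq P α = tseq P α
    rw [hs]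
    exact Ordinal.add_sub_cancel_of_le (blsub_tseq_le hreg hPlt hPcof hα)

end

lemma useq_tvalSet {κ : Cardinal.{u}} (hreg : κ.IsRegular) {x : Ordinal.{u} → Ordinal.{u}}
    (hx : ∀ β, x β < κ.ord) : ∀ α < κ.ord, useq (tvalSet κ x) α = x α := by
  intro α hα
  have hfun : (fun (β : Ordinal.{u}) (hβ : β < α) => tseq (tvalSet κ x) β)
      = fun β hβ => sseq x β + x β := by
    funext β hβ
    exact tseq_tvalSet hreg hx β (hβ.trans hα)
  show tseq (tvalSet κ x) α - Ordinal.blsub α (fun β _ => tseq (tvalSet κ x) β) = x α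
  rw [tseq_tvalSet hreg hx α hα, hfun, ← sseq_def]
  show sseq x α + x α - sseq x α = x α
  exact Ordinal.add_sub_cancel _ _


section Bridge

variable {κ : Cardinal.{u}}

noncomputable def toOrd (i : κ.ord.ToType) : Ordinal.{u} :=
  ((Ordinal.ToType.mk (o := κ.ord)).symm i).1

lemma toOrd_lt (i : κ.ord.ToType) : toOrd i < κ.ord :=
  ((Ordinal.ToType.mk (o := κ.ord)).symm i).2

noncomputable def ofOrd {γ : Ordinal.{u}} (h : γ < κ.ord) : κ.ord.ToType :=
  Ordinal.ToType.mk (o := κ.ord) ⟨γ, h⟩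

@[simp] lemma toOrd_ofOrd {γ : Ordinal.{u}} (h : γ < κ.ord) : toOrd (ofOrd h) = γ := by
  simp [toOrd, ofOrd]

@[simp] lemma ofOrd_toOrd (i : κ.ord.ToType) : ofOrd (toOrd_lt i) = i := by
  show Ordinal.ToType.mk (o := κ.ord) ⟨((Ordinal.ToType.mk (o := κ.ord)).symm i).1, _⟩ = i
  exact (Ordinal.ToType.mk (o := κ.ord)).apply_symm_apply i

lemma lt_iff_toOrd {i j : κ.ord.ToType} : i < j ↔ toOrd i < toOrd j :=
  (Subtype.coe_lt_coe.trans (OrderIso.lt_iff_lt _)).symm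

lemma le_iff_toOrd {i j : κ.ord.ToType} : i ≤ j ↔ toOrd i ≤ toOrd j :=
  (Subtype.coe_le_coe.trans (OrderIso.le_iff_le _)).symm

lemma ofOrd_lt_iff {γ δ : Ordinal.{u}} (h : γ < κ.ord) (h' : δ < κ.ord) :
    ofOrd h < ofOrd h' ↔ γ < δ := by
  rw [lt_iff_toOrd, toOrd_ofOrd, toOrd_ofOrd]

/-- the ordinal-valued version of `x : GenBaire κ`. -/
noncomputable def xo (x : GenBaire κ) (γ : Ordinal.{u}) : Ordinal.{u} :=
  if h : γ < κ.ord then toOrd (x (ofOrd h)) else 0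

lemma xo_lt (h0 : (0:Ordinal.{u}) < κ.ord) (x : GenBaire κ) (γ : Ordinal.{u}) :
    xo x γ < κ.ord := by
  unfold xo
  split
  · exact toOrd_lt _
  · exact h0

open Classical in
/-- The map from the Baire space to the Cantor space. -/
noncomputable def Fmap (x : GenBaire κ) : GenCantor κ := fun b =>
  decide (∃ α, α < κ.ord ∧ toOrd b = tval (xo x) α)

/-- The set of positions where `y : GenCantor κ` takes value `true`. -/
def Pset (y : GenCantor κ) : Set Ordinal.{u} :=
  {γ | ∃ h : γ < κ.ord, y (ofOrd h) = true}

/-- The inverse map. -/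
noncomputable def Gmap (y : GenCantor κ) : GenBaire κ := fun i =>
  if h : useq (Pset y) (toOrd i) < κ.ord then ofOrd h else i

lemma Pset_lt (y : GenCantor κ) : ∀ γ ∈ Pset y, γ < κ.ord := fun _ hγ => hγ.1

end Bridge


section Main

variable {κ : Cardinal.{u}} (hreg : κ.IsRegular)

lemma Pset_cof {y : GenCantor κ} (hy : ∀ a : κ.ord.ToType, ∃ b, a ≤ b ∧ y b = true) :
    ∀ γ < κ.ord, ∃ δ ∈ Pset y, γ ≤ δ := by
  intro γ hγ
  obtain ⟨b, hab, hb⟩ := hy (ofOrd hγ)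
  refine ⟨toOrd b, ⟨toOrd_lt b, ?_⟩, ?_⟩
  · rw [ofOrd_toOrd]; exact hb
  · have := le_iff_toOrd.mp hab
    rwa [toOrd_ofOrd] at this

include hreg

lemma Fmap_mem (x : GenBaire κ) : ∀ a, ∃ b, a ≤ b ∧ Fmap x b = true := by
  classical
  intro a
  have h0 : (0 : Ordinal.{u}) < κ.ord := hreg.ord_pos
  have hx := xo_lt h0 x
  have hδ : tval (xo x) (toOrd a) < κ.ord := tval_lt_ord hreg hx _ (toOrd_lt a)
  refine ⟨ofOrd hδ, ?_, ?_⟩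
  · rw [le_iff_toOrd, toOrd_ofOrd]
    exact le_trans (sseq_strictMono (xo x)).le_apply (le_self_add)
  · show decide _ = true
    simp only [decide_eq_true_eq, toOrd_ofOrd]
    exact ⟨toOrd a, toOrd_lt a, rfl⟩

lemma Pset_Fmap (x : GenBaire κ) : Pset (Fmap x) = tvalSet κ (xo x) := by
  classical
  have h0 : (0 : Ordinal.{u}) < κ.ord := hreg.ord_pos
  ext γ
  constructor
  · rintro ⟨h, hb⟩
    change decide _ = true at hb
    show ∃ α, α < κ.ord ∧ γ = tval (xo x) α
    simpa only [decide_eq_true_eq, toOrd_ofOrd] using hb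
  · rintro ⟨α, hα, rfl⟩
    refine ⟨tval_lt_ord hreg (xo_lt h0 x) α hα, ?_⟩
    show decide _ = true
    simp only [decide_eq_true_eq, toOrd_ofOrd]
    exact ⟨α, hα, rfl⟩

lemma Gmap_Fmap (x : GenBaire κ) : Gmap (Fmap x) = x := by
  have h0 : (0 : Ordinal.{u}) < κ.ord := hreg.ord_pos
  funext i
  have hx := xo_lt h0 x
  have hu : useq (Pset (Fmap x)) (toOrd i) = toOrd (x i) := by
    rw [Pset_Fmap hreg x, useq_tvalSet hreg hx _ (toOrd_lt i)]
    show (if h : toOrd i < κ.ord then toOrd (x (ofOrd h)) else 0) = toOrd (x i)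
    rw [dif_pos (toOrd_lt i), ofOrd_toOrd]
  show (if h : useq (Pset (Fmap x)) (toOrd i) < κ.ord then ofOrd h else i) = x i
  simp only [hu]
  rw [dif_pos (toOrd_lt (x i)), ofOrd_toOrd]

lemma Fmap_Gmap {y : GenCantor κ} (hy : ∀ a, ∃ b, a ≤ b ∧ y b = true) :
    Fmap (Gmap y) = y := by
  classical
  have h0 : (0 : Ordinal.{u}) < κ.ord := hreg.ord_pos
  have hPlt := Pset_lt y
  have hPcof := Pset_cof hy
  have hxo : ∀ γ < κ.ord, xo (Gmap y) γ = useq (Pset y) γ := by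
    intro γ h
    show (if h' : γ < κ.ord then toOrd ((Gmap y) (ofOrd h')) else 0) = _
    rw [dif_pos h]
    show toOrd (if h2 : useq (Pset y) (toOrd (ofOrd h)) < κ.ord then ofOrd h2 else ofOrd h) = _
    simp only [toOrd_ofOrd]
    rw [dif_pos (useq_lt_ord hreg hPlt hPcof γ h), toOrd_ofOrd]
  have htval : ∀ α < κ.ord, tval (xo (Gmap y)) α = tseq (Pset y) α := by
    intro α hα
    have hsseq : sseq (xo (Gmap y)) α = sseq (useq (Pset y)) α :=
      sseq_congr α (fun β hβ => hxo β (hβ.trans hα))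
    show sseq (xo (Gmap y)) α + xo (Gmap y) α = _
    rw [hsseq, hxo α hα]
    exact tval_useq hreg hPlt hPcof α hα
  funext b
  have hiff : (∃ α, α < κ.ord ∧ toOrd b = tval (xo (Gmap y)) α) ↔ y b = true := by
    constructor
    · rintro ⟨α, hα, hb⟩
      rw [htval α hα] at hb
      have hmem : toOrd b ∈ Pset y := hb ▸ (tseq_spec hreg hPlt hPcof α hα).1
      obtain ⟨h, htrue⟩ := hmem
      have hofb : ofOrd h = b := ofOrd_toOrd b
      rwa [hofb] at htrue
    · intro hb
      have hmem : toOrd b ∈ Pset y := by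
        refine ⟨toOrd_lt b, ?_⟩
        rw [ofOrd_toOrd]; exact hb
      obtain ⟨α, hα, hts⟩ := tseq_surj hreg hPlt hPcof hmem
      exact ⟨α, hα, by rw [htval α hα, hts]⟩
  show decide _ = y b
  cases hyb : y b
  · simp only [decide_eq_false_iff_not]
    intro hP
    have := hiff.mp hP
    rw [hyb] at this
    exact Bool.false_ne_true this
  · simp only [decide_eq_true_eq]
    exact hiff.mpr hyb

omit hreg in
lemma exists_tval_congr {x y : Ordinal.{u} → Ordinal.{u}} {ᾱ γ : Ordinal.{u}}
    (hagree : ∀ β < ᾱ, x β = y β) (hγ : γ < sseq x ᾱ)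
    (h : ∃ α, α < κ.ord ∧ γ = tval x α) : ∃ α, α < κ.ord ∧ γ = tval y α := by
  obtain ⟨α, hα, rfl⟩ := h
  have hlt : α < ᾱ := by
    by_contra hc
    push_neg at hc
    exact absurd hγ (not_lt.mpr
      (le_trans ((sseq_strictMono x).monotone hc) (le_self_add)))
  refine ⟨α, hα, ?_⟩
  show sseq x α + x α = sseq y α + y α
  rw [sseq_congr α (fun β hβ => hagree β (hβ.trans hlt)), hagree α hlt]

omit hreg in
lemma isOpen_basic_baire (a : κ.ord.ToType) (z : GenBaire κ) :
    IsOpen {x : GenBaire κ | ∀ b, b < a → x b = z b} :=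
  TopologicalSpace.isOpen_generateFrom_of_mem ⟨a, z, rfl⟩

omit hreg in
lemma isOpen_basic_cantor (a : κ.ord.ToType) (z : GenCantor κ) :
    IsOpen {x : GenCantor κ | ∀ b, b < a → x b = z b} :=
  TopologicalSpace.isOpen_generateFrom_of_mem ⟨a, z, rfl⟩

lemma Fmap_continuous : Continuous (Fmap : GenBaire κ → GenCantor κ) := by
  classical
  apply continuous_generateFrom_iff.mpr
  rintro U ⟨a, z, rfl⟩
  rw [isOpen_iff_forall_mem_open]
  intro x hx
  refine ⟨{x' : GenBaire κ | ∀ i, i < a → x' i = x i}, ?_,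
    isOpen_basic_baire a x, fun i hi => rfl⟩
  intro x' hx'
  intro b hb
  have hagree : ∀ γ < toOrd a, xo x' γ = xo x γ := by
    intro γ h
    have hγO : γ < κ.ord := h.trans (toOrd_lt a)
    show (if h' : γ < κ.ord then toOrd (x' (ofOrd h')) else 0)
        = (if h' : γ < κ.ord then toOrd (x (ofOrd h')) else 0)
    rw [dif_pos hγO, dif_pos hγO,
      hx' (ofOrd hγO) (by rw [lt_iff_toOrd, toOrd_ofOrd]; exact h)]
  have hγ : toOrd b < sseq (xo x) (toOrd a) :=
    lt_of_lt_of_le (lt_iff_toOrd.mp hb) (sseq_strictMono (xo x)).le_apply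
  have hγ' : toOrd b < sseq (xo x') (toOrd a) := by
    rwa [sseq_congr _ hagree]
  have key : Fmap x' b = Fmap x b := by
    show decide _ = decide _
    apply decide_eq_decide.mpr
    exact ⟨exists_tval_congr hagree hγ',
      exists_tval_congr (fun β h => (hagree β h).symm) hγ⟩
  rw [key]
  exact hx b hb

lemma Gmap_continuous :
    Continuous (fun y : {x : GenCantor κ | ∀ a, ∃ b, a ≤ b ∧ x b = true} =>
      Gmap (y : GenCantor κ)) := by
  apply continuous_generateFrom_iff.mpr
  rintro U ⟨a, z, rfl⟩
  rw [isOpen_iff_forall_mem_open]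
  rintro ⟨y, hy⟩ hmem
  have hPlt := Pset_lt y
  have hPcof := Pset_cof hy
  have hδlt : Ordinal.blsub (toOrd a) (fun β _ => tseq (Pset y) β) < κ.ord :=
    Cardinal.blsub_lt_ord_of_isRegular hreg (Cardinal.lt_ord.mp (toOrd_lt a))
      (fun β hβ => tseq_lt_ord hreg hPlt hPcof β (hβ.trans (toOrd_lt a)))
  refine ⟨Subtype.val ⁻¹' {w : GenCantor κ | ∀ b, b < ofOrd hδlt → w b = y b}, ?_,
    (isOpen_basic_cantor _ y).preimage continuous_subtype_val, fun b hb => rfl⟩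
  rintro ⟨y', hy'⟩ hagree
  intro i hi
  have hagO : ∀ γ < Ordinal.blsub (toOrd a) (fun β _ => tseq (Pset y) β),
      (γ ∈ Pset y ↔ γ ∈ Pset y') := by
    intro γ h
    have hγO : γ < κ.ord := h.trans hδlt
    have heq : y' (ofOrd hγO) = y (ofOrd hγO) :=
      hagree (ofOrd hγO) (by rw [ofOrd_lt_iff]; exact h)
    constructor
    · rintro ⟨h1, h2⟩
      refine ⟨hγO, ?_⟩
      rw [heq]
      exact h2
    · rintro ⟨h1, h2⟩
      refine ⟨hγO, ?_⟩
      rw [← heq]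
      exact h2
  have htseq : ∀ β < toOrd a, tseq (Pset y') β = tseq (Pset y) β := fun β hβ =>
    tseq_congr hreg hPlt hPcof hagO β (hβ.trans (toOrd_lt a)) (Ordinal.lt_blsub _ β hβ)
  have hia : toOrd i < toOrd a := lt_iff_toOrd.mp hi
  have huseq : useq (Pset y') (toOrd i) = useq (Pset y) (toOrd i) := by
    show tseq (Pset y') (toOrd i) - _ = tseq (Pset y) (toOrd i) - _
    have hfun : (fun (β : Ordinal.{u}) (_ : β < toOrd i) => tseq (Pset y') β)
        = fun β _ => tseq (Pset y) β := by
      funext β hβ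
      exact htseq β (hβ.trans hia)
    rw [htseq _ hia, hfun]
  show (if h : useq (Pset y') (toOrd i) < κ.ord then ofOrd h else i) = z i
  simp only [huseq]
  exact hmem i hi

end Main

end Stmt1Aux

/-- The generalized Baire space is homeomorphic to the subspace of the
generalized Cantor space of functions taking the value 1 cofinally often. -/
theorem stmt_1 (κ : Cardinal.{u}) (hreg : κ.IsRegular) (hunc : ℵ₀ < κ)
    (hpow : (2 : Cardinal.{u}) ^< κ = κ) :
    Nonempty (GenBaire κ ≃ₜ {x : GenCantor κ | ∀ a, ∃ b, a ≤ b ∧ x b = true}) := by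
  refine ⟨{
    toFun := fun x => ⟨Stmt1Aux.Fmap x, Stmt1Aux.Fmap_mem hreg x⟩
    invFun := fun y => Stmt1Aux.Gmap y.1
    left_inv := fun x => Stmt1Aux.Gmap_Fmap hreg x
    right_inv := fun y => Subtype.ext (Stmt1Aux.Fmap_Gmap hreg y.2)
    continuous_toFun := (Stmt1Aux.Fmap_continuous hreg).subtype_mk _
    continuous_invFun := Stmt1Aux.Gmap_continuous hreg }⟩

end GDST
end

section
/- If X is an fSC_κ-space and Y ⊆ X is a G_δ^κ subset, then Y with the subspace topology is an fSC_κ-space as well. -/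
universe u v

open Cardinal Set

namespace GDST

section LiftAux

variable {κ : Cardinal.{u}} {X : Type u} [TopologicalSpace X]

open Classical in
noncomputable def pickW (Y : Set X) (T : Set ↥Y) (p : Set ↥Y × ↥Y) : Set X :=
  if h : ∃ W : Set X, IsOpen W ∧ (p.2 : X) ∈ W ∧ p.1 = (Subtype.val ⁻¹' W) ∩ T then h.choose
  else Set.univ

lemma pickW_isOpen (Y : Set X) (T : Set ↥Y) (p : Set ↥Y × ↥Y) : IsOpen (pickW Y T p) := by
  classical
  rw [pickW]
  split_ifs with h
  · exact h.choose_spec.1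
  · exact isOpen_univ

lemma pickW_spec {Y : Set X} {T : Set ↥Y} {p : Set ↥Y × ↥Y}
    (h : ∃ W : Set X, IsOpen W ∧ (p.2 : X) ∈ W ∧ p.1 = (Subtype.val ⁻¹' W) ∩ T) :
    (p.2 : X) ∈ pickW Y T p ∧ p.1 = (Subtype.val ⁻¹' pickW Y T p) ∩ T := by
  classical
  rw [pickW, dif_pos h]
  exact ⟨h.choose_spec.2.1, h.choose_spec.2.2⟩

/-- The simulated run of player I in `X` induced by a run of player I in the subspace `Y`. -/
noncomputable def liftMove (σ : Strategy κ X) (U : κ.ord.ToType → Set X) (Y : Set X)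
    (g : IMoves κ ↥Y) (a : κ.ord.ToType) : Set X × X :=
  (pickW Y (Subtype.val ⁻¹' (InterBelow (σ (fun b => if h : b < a then liftMove σ U Y g b
        else ((∅ : Set X), ((g b).2 : X)))) a)) (g a)
      ∩ U a ∩ InterBelow (σ (fun b => if h : b < a then liftMove σ U Y g b
        else ((∅ : Set X), ((g b).2 : X)))) a,
   ((g a).2 : X))
termination_by a
decreasing_by all_goals exact h

variable {σ : Strategy κ X} {U : κ.ord.ToType → Set X} {Y : Set X}

lemma interBelow_prev (hσ : IsIIStrategy σ) (g : IMoves κ ↥Y) (a : κ.ord.ToType) :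
    InterBelow (σ (fun b => if h : b < a then liftMove σ U Y g b
        else ((∅ : Set X), ((g b).2 : X)))) a
      = InterBelow (σ (liftMove σ U Y g)) a := by
  have key : ∀ b, b < a →
      σ (fun b => if h : b < a then liftMove σ U Y g b
        else ((∅ : Set X), ((g b).2 : X))) b = σ (liftMove σ U Y g) b := by
    intro b hb
    exact hσ _ _ b (fun c hc => dif_pos (lt_of_le_of_lt hc hb))
  simp only [InterBelow]
  exact Set.iInter_congr fun b => Set.iInter_congr fun hb => key b hb

lemma liftMove_eq (hσ : IsIIStrategy σ) (g : IMoves κ ↥Y) (a : κ.ord.ToType) :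
    liftMove σ U Y g a =
      (pickW Y (Subtype.val ⁻¹' (InterBelow (σ (liftMove σ U Y g)) a)) (g a)
        ∩ U a ∩ InterBelow (σ (liftMove σ U Y g)) a,
       ((g a).2 : X)) := by
  rw [liftMove, interBelow_prev hσ]

/-- The induced strategy of player II on the subspace. -/
noncomputable def liftStrat (σ : Strategy κ X) (U : κ.ord.ToType → Set X) (Y : Set X) :
    Strategy κ ↥Y :=
  fun g a => Subtype.val ⁻¹' (σ (liftMove σ U Y g) a)

lemma interBelow_liftStrat (g : IMoves κ ↥Y) (a : κ.ord.ToType) :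
    InterBelow (liftStrat σ U Y g) a
      = Subtype.val ⁻¹' (InterBelow (σ (liftMove σ U Y g)) a) := by
  simp [InterBelow, liftStrat, Set.preimage_iInter]

lemma lift_pick {g : IMoves κ ↥Y} {a : κ.ord.ToType}
    (hI : LegalI (liftStrat σ U Y) g a) :
    ((g a).2 : X) ∈ pickW Y (Subtype.val ⁻¹' (InterBelow (σ (liftMove σ U Y g)) a)) (g a) ∧
      (g a).1 = (Subtype.val ⁻¹'
          (pickW Y (Subtype.val ⁻¹' (InterBelow (σ (liftMove σ U Y g)) a)) (g a)))
        ∩ Subtype.val ⁻¹' (InterBelow (σ (liftMove σ U Y g)) a) := by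
  obtain ⟨⟨W', hW'open, hW'eq⟩, hx⟩ := hI
  obtain ⟨W, hWopen, hWpre⟩ := isOpen_induced_iff.mp hW'open
  rw [interBelow_liftStrat] at hW'eq
  apply pickW_spec
  refine ⟨W, hWopen, ?_, by rw [hW'eq, hWpre]⟩
  have : (g a).2 ∈ W' := by
    have := hx
    rw [hW'eq] at this
    exact this.1
  rw [← hWpre] at this
  exact this

lemma lift_legalI (hσ : IsIIStrategy σ) (hU : ∀ i, IsOpen (U i)) (hYU : Y = ⋂ i, U i)
    {g : IMoves κ ↥Y} {a : κ.ord.ToType} (hI : LegalI (liftStrat σ U Y) g a) :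
    LegalI σ (liftMove σ U Y g) a := by
  obtain ⟨hmem, heq⟩ := lift_pick hI
  constructor
  · refine ⟨pickW Y (Subtype.val ⁻¹' (InterBelow (σ (liftMove σ U Y g)) a)) (g a) ∩ U a,
      (pickW_isOpen _ _ _).inter (hU a), ?_⟩
    rw [liftMove_eq hσ]
  · rw [liftMove_eq hσ]
    refine ⟨⟨hmem, ?_⟩, ?_⟩
    · exact Set.mem_iInter.mp (hYU.subset (g a).2.2) a
    · have hx : (g a).2 ∈ (g a).1 := hI.2
      rw [heq] at hx
      exact hx.2

lemma lift_legalBelow (hσw : WinningFair σ) (hU : ∀ i, IsOpen (U i)) (hYU : Y = ⋂ i, U i)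
    (g : IMoves κ ↥Y) :
    ∀ a, LegalBelow (liftStrat σ U Y) g a → LegalBelow σ (liftMove σ U Y g) a := by
  intro a
  induction a using WellFoundedLT.induction with
  | ind a IH =>
    intro hbelow b hb
    have hbb : LegalBelow (liftStrat σ U Y) g b := fun c hc => hbelow c (hc.trans hb)
    have hfb : LegalBelow σ (liftMove σ U Y g) b := IH b hb hbb
    have hfI : LegalI σ (liftMove σ U Y g) b := lift_legalI hσw.1 hU hYU (hbelow b hb).1
    exact ⟨hfI, hσw.2.1 _ b hfb hfI⟩

lemma lift_legalII (hσw : WinningFair σ) (hU : ∀ i, IsOpen (U i)) (hYU : Y = ⋂ i, U i)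
    {g : IMoves κ ↥Y} {a : κ.ord.ToType}
    (hb : LegalBelow (liftStrat σ U Y) g a) (hI : LegalI (liftStrat σ U Y) g a) :
    LegalII (liftStrat σ U Y) g a := by
  have hσ := hσw.1
  have hfb : LegalBelow σ (liftMove σ U Y g) a := lift_legalBelow hσw hU hYU g a hb
  have hfI : LegalI σ (liftMove σ U Y g) a := lift_legalI hσ hU hYU hI
  have hfII : LegalII σ (liftMove σ U Y g) a := hσw.2.1 _ a hfb hfI
  obtain ⟨hmem, heq⟩ := lift_pick hI
  refine ⟨?_, ?_, ?_⟩
  · obtain ⟨W, hWopen, hWeq⟩ := hfII.1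
    refine ⟨Subtype.val ⁻¹' W, hWopen.preimage continuous_subtype_val, ?_⟩
    show liftStrat σ U Y g a = _
    rw [interBelow_liftStrat]
    simp only [liftStrat]
    rw [hWeq, Set.preimage_inter]
  · show (g a).2 ∈ Subtype.val ⁻¹' (σ (liftMove σ U Y g) a)
    have h2 : (liftMove σ U Y g a).2 = ((g a).2 : X) := by rw [liftMove_eq hσ]
    have := hfII.2.1
    rw [h2] at this
    exact this
  · intro x hx
    have hx' : (x : X) ∈ σ (liftMove σ U Y g) a := hx
    have hx1 : (x : X) ∈ (liftMove σ U Y g a).1 := hfII.2.2 hx'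
    rw [liftMove_eq hσ] at hx1
    rw [heq]
    exact ⟨hx1.1.1, hx1.2⟩

lemma liftMove_congr (hσ : IsIIStrategy σ) {g g' : IMoves κ ↥Y} :
    ∀ a, (∀ b, b ≤ a → g b = g' b) → liftMove σ U Y g a = liftMove σ U Y g' a := by
  intro a
  induction a using WellFoundedLT.induction with
  | ind a IH =>
    intro hag
    have hσeq : ∀ b, b < a → σ (liftMove σ U Y g) b = σ (liftMove σ U Y g') b := by
      intro b hb
      exact hσ _ _ b (fun c hc => IH c (lt_of_le_of_lt hc hb)
        (fun d hd => hag d (hd.trans (le_of_lt (lt_of_le_of_lt hc hb)))))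
    have hInter : InterBelow (σ (liftMove σ U Y g)) a
        = InterBelow (σ (liftMove σ U Y g')) a := by
      simp only [InterBelow]
      exact Set.iInter_congr fun b => Set.iInter_congr fun hb => hσeq b hb
    rw [liftMove_eq hσ, liftMove_eq hσ, hInter, hag a le_rfl]

lemma liftStrat_isII (hσ : IsIIStrategy σ) : IsIIStrategy (liftStrat σ U Y) := by
  intro g g' a hag
  have key := hσ (liftMove σ U Y g) (liftMove σ U Y g') a
    (fun b hb => liftMove_congr hσ b (fun c hc => hag c (hc.trans hb)))
  show Subtype.val ⁻¹' _ = Subtype.val ⁻¹' _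
  rw [key]

lemma lift_winningFair (hσw : WinningFair σ) (hU : ∀ i, IsOpen (U i)) (hYU : Y = ⋂ i, U i) :
    WinningFair (liftStrat σ U Y) := by
  obtain ⟨hσ, hans, hfair⟩ := hσw
  refine ⟨liftStrat_isII hσ, fun g a hb hI => lift_legalII ⟨hσ, hans, hfair⟩ hU hYU hb hI, ?_⟩
  intro g hall
  have hballτ : ∀ a, LegalBelow (liftStrat σ U Y) g a := fun a b _ => hall b
  have hfall : ∀ a, LegalI σ (liftMove σ U Y g) a ∧ LegalII σ (liftMove σ U Y g) a := by
    intro a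
    have hfb := lift_legalBelow ⟨hσ, hans, hfair⟩ hU hYU g a (hballτ a)
    have hfI := lift_legalI hσ hU hYU (hall a).1
    exact ⟨hfI, hans _ a hfb hfI⟩
  rcases hfair _ hfall with ⟨a, hlim, hempty⟩ | ⟨z, hz⟩
  · left
    exact ⟨a, hlim, by rw [interBelow_liftStrat, hempty, Set.preimage_empty]⟩
  · right
    have hzY : z ∈ Y := by
      rw [hYU, Set.mem_iInter]
      intro i
      have h1 : z ∈ σ (liftMove σ U Y g) i := Set.mem_iInter.mp hz i
      have h2 := (hfall i).2.2.2 h1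
      rw [liftMove_eq hσ] at h2
      exact h2.1.2
    exact ⟨⟨z, hzY⟩, Set.mem_iInter.mpr fun a => Set.mem_iInter.mp hz a⟩

lemma hasWeightLE_subtype (h : HasWeightLE κ X) (Y : Set X) : HasWeightLE κ ↥Y := by
  obtain ⟨B, hB, hcard⟩ := h
  exact ⟨(Set.preimage (Subtype.val : ↥Y → X)) '' B,
    hB.isInducing Topology.IsInducing.subtypeVal, (Cardinal.mk_image_le).trans hcard⟩

end LiftAux

/-- A G_δ^κ subset of an fSC_κ-space is an fSC_κ-space. -/
theorem stmt_2 (κ : Cardinal.{u}) (hreg : κ.IsRegular) (hunc : ℵ₀ < κ)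
    (hpow : (2 : Cardinal.{u}) ^< κ = κ)
    (X : Type u) [TopologicalSpace X] [T2Space X] [RegularSpace X]
    (hX : fSCSpace κ X) (Y : Set X) (hY : IsGDeltaKappa κ Y) :
    fSCSpace κ ↥Y := by
  obtain ⟨hw, σ, hσw⟩ := hX
  obtain ⟨U, hUopen, hYU⟩ := hY
  exact ⟨hasWeightLE_subtype hw Y, liftStrat σ U Y, lift_winningFair hσw hUopen hYU⟩

end GDST
end

section
/- (Sikorski) Let X be a regular Hausdorff space of weight at most κ and let 𝔾 be a linearly ordered abelian group of degree κ. The following are equivalent: (a) X is κ-additive; (b) X is 𝔾-metrizable, i.e. admits a compatible 𝔾-metric; (c) X is homeomorphic to a subspace of the generalized Cantor space 2^κ; (d) X is homeomorphic to a subspace of the generalized Baire space κ^κ. -/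
universe u v

open Cardinal Set

namespace GDST

open TopologicalSpace Topology

variable {κ : Cardinal.{u}}

lemma mk_toType_eq (κ : Cardinal.{u}) : #κ.ord.ToType = κ := by
  rw [Cardinal.mk_toType, Cardinal.card_ord]

lemma nonempty_toType (h : 0 < κ) : Nonempty κ.ord.ToType := by
  rw [← Cardinal.mk_ne_zero_iff, mk_toType_eq]
  exact h.ne'

lemma mk_Iio_lt (a : κ.ord.ToType) : #(Iio a) < κ := Cardinal.mk_Iio_ord_toType a

lemma exists_gt_toType (h : ℵ₀ ≤ κ) (a : κ.ord.ToType) : ∃ b, a < b := by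
  let e := Ordinal.ToType.mk (o := κ.ord)
  have hlim : Order.IsSuccLimit κ.ord := Cardinal.isSuccLimit_ord h
  set o : Iio κ.ord := e.symm a with ho
  have h1 : Order.succ o.1 < κ.ord := hlim.succ_lt o.2
  refine ⟨e ⟨Order.succ o.1, h1⟩, ?_⟩
  have h2 : o < (⟨Order.succ o.1, h1⟩ : Iio κ.ord) :=
    Subtype.coe_lt_coe.1 (by exact Order.lt_succ o.1)
  have h3 := e.lt_iff_lt.mpr h2
  simpa [ho] using h3

lemma mk_Iic_lt (h : ℵ₀ ≤ κ) (a : κ.ord.ToType) : #(Iic a) < κ := by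
  obtain ⟨b, hb⟩ := exists_gt_toType h a
  calc #(Iic a) ≤ #(Iio b) := Cardinal.mk_le_mk_of_subset (fun x hx => lt_of_le_of_lt hx hb)
    _ < κ := mk_Iio_lt b

lemma bounded_of_mk_lt (hreg : κ.IsRegular) {Z : Type u} (f : Z → κ.ord.ToType)
    (hZ : #Z < κ) : ∃ a, ∀ z, f z ≤ a := by
  letI : IsWellOrder κ.ord.ToType (· < ·) := isWellOrder_lt
  set F : Z → Ordinal.{u} := fun z => Ordinal.typein (α := κ.ord.ToType) (· < ·) (f z) with hF
  have hFlt : ∀ z, F z < κ.ord := fun z => Ordinal.typein_lt_self _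
  have hsup : iSup F < κ.ord := Cardinal.iSup_lt_ord_of_isRegular hreg hZ hFlt
  refine ⟨Ordinal.enum (α := κ.ord.ToType) (· < ·)
    ⟨iSup F, by rwa [Ordinal.type_toType]⟩, fun z => ?_⟩
  have h1 : F z ≤ iSup F := Ordinal.le_iSup F z
  have h2 : Ordinal.typein (α := κ.ord.ToType) (· < ·)
      (Ordinal.enum (α := κ.ord.ToType) (· < ·) ⟨iSup F, by rwa [Ordinal.type_toType]⟩) = iSup F :=
    Ordinal.typein_enum _ _
  have h3 := h1.trans h2.ge
  exact le_of_not_gt ((Ordinal.typein_le_typein (· < ·)).mp h3)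



variable {κ : Cardinal.{u}} {G : Type u} [AddCommGroup G] [LinearOrder G] [IsOrderedAddMonoid G]

lemma HasDegree.exists_pos (hG : HasDegree G κ) (hκ : 0 < κ) : ∃ ε : G, 0 < ε := by
  by_contra h
  push_neg at h
  have h2 := hG.2 ∅ (by simp) (fun δ hδ => absurd hδ (not_lt.mpr (h δ)))
  rw [Cardinal.mk_emptyCollection] at h2
  exact absurd h2 (not_le.mpr hκ)

lemma HasDegree.lower_bound (hG : HasDegree G κ) {S : Set G}
    (hS : ∀ ε ∈ S, 0 < ε) (hcard : #S < κ) :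
    ∃ ε : G, 0 < ε ∧ ∀ s ∈ S, ε ≤ s := by
  by_contra h
  push_neg at h
  have h2 := hG.2 S hS (fun δ hδ => by
    obtain ⟨s, hsS, hs⟩ := h δ hδ
    exact ⟨s, hsS, hs.le⟩)
  exact absurd h2 (not_le.mpr hcard)

lemma HasDegree.exists_between (hG : HasDegree G κ) (hκ : 1 < κ) {ε : G} (hε : 0 < ε) :
    ∃ δ : G, 0 < δ ∧ δ < ε := by
  by_contra h
  push_neg at h
  have h2 := hG.2 {ε} (by simpa using hε) (fun δ hδ => ⟨ε, mem_singleton _, h δ hδ⟩)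
  rw [Cardinal.mk_singleton] at h2
  exact absurd h2 (not_le.mpr hκ)

lemma exists_strictAnti_coinitial (hreg : κ.IsRegular) (hunc : ℵ₀ < κ) (hG : HasDegree G κ) :
    ∃ ε : κ.ord.ToType → G, (∀ a, 0 < ε a) ∧ StrictAnti ε ∧ ∀ δ : G, 0 < δ → ∃ a, ε a ≤ δ := by
  classical
  have hκ0 : 0 < κ := hreg.pos
  have hκ1 : 1 < κ := (one_lt_aleph0).trans hunc
  obtain ⟨S, hSpos, hScoin, hScard⟩ := hG.1
  obtain ⟨δ0, hδ0⟩ := hG.exists_pos hκ0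
  obtain ⟨s0, hs0S, _⟩ := hScoin δ0 hδ0
  rw [← mk_toType_eq κ, Cardinal.le_def] at hScard
  obtain ⟨φ⟩ := hScard
  set g : κ.ord.ToType → G := fun a => if h : ∃ s : ↥S, φ s = a then (h.choose : ↥S).1 else s0
    with hg
  have hgS : ∀ a, g a ∈ S := by
    intro a
    rw [hg]
    dsimp only
    split
    · next h => exact h.choose.2
    · exact hs0S
  have hgsurj : ∀ s ∈ S, ∃ a, g a = s := by
    intro s hs
    refine ⟨φ ⟨s, hs⟩, ?_⟩
    have hex : ∃ t : ↥S, φ t = φ ⟨s, hs⟩ := ⟨⟨s, hs⟩, rfl⟩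
    rw [hg]
    dsimp only
    rw [dif_pos hex]
    have h2 := φ.injective hex.choose_spec
    rw [h2]
  have spec : ∀ a : κ.ord.ToType, ∀ IH : ∀ b, b < a → {x : G // 0 < x},
      ∃ η : G, 0 < η ∧ η ≤ g a ∧ ∀ b (hb : b < a), η < (IH b hb).1 := by
    intro a IH
    set T : Set G := insert (g a) (range fun b : Iio a => (IH b.1 b.2).1) with hT
    have hTpos : ∀ x ∈ T, 0 < x := by
      rintro x (rfl | ⟨b, rfl⟩)
      · exact hSpos _ (hgS a)
      · exact (IH b.1 b.2).2
    have hTcard : #T < κ := by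
      calc #T ≤ #(range fun b : Iio a => (IH b.1 b.2).1) + 1 := Cardinal.mk_insert_le
        _ ≤ #(Iio a) + 1 := by
              gcongr
              exact Cardinal.mk_range_le
        _ < κ := Cardinal.add_lt_of_lt hunc.le (mk_Iio_lt a) hκ1
    obtain ⟨ε0, hε0, hε0le⟩ := hG.lower_bound hTpos hTcard
    obtain ⟨η', hη', hη'lt⟩ := hG.exists_between hκ1 hε0
    refine ⟨min η' (g a), lt_min hη' (hSpos _ (hgS a)), min_le_right _ _, fun b hb => ?_⟩
    exact lt_of_le_of_lt (min_le_left _ _)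
      (hη'lt.trans_le (hε0le _ (mem_insert_of_mem _ ⟨⟨b, hb⟩, rfl⟩)))
  have wf : WellFounded ((· < ·) : κ.ord.ToType → κ.ord.ToType → Prop) := wellFounded_lt
  set F : κ.ord.ToType → {x : G // 0 < x} :=
    wf.fix (fun a IH => ⟨(spec a IH).choose, (spec a IH).choose_spec.1⟩) with hFdef
  have hFeq : ∀ a, F a = ⟨(spec a (fun b _ => F b)).choose,
      (spec a (fun b _ => F b)).choose_spec.1⟩ := by
    intro a
    rw [hFdef]
    exact wf.fix_eq _ a
  have key : ∀ a, (F a).1 ≤ g a ∧ ∀ b, b < a → (F a).1 < (F b).1 := by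
    intro a
    have h := hFeq a
    have hs := (spec a (fun b _ => F b)).choose_spec
    constructor
    · rw [h]; exact hs.2.1
    · intro b hb; rw [h]; exact hs.2.2 b hb
  refine ⟨fun a => (F a).1, fun a => (F a).2, ?_, ?_⟩
  · intro a b hab
    exact (key b).2 a hab
  · intro δ hδ
    obtain ⟨s, hsS, hsδ⟩ := hScoin δ hδ
    obtain ⟨a, ha⟩ := hgsurj s hsS
    exact ⟨a, ((key a).1.trans (le_of_eq ha)).trans hsδ⟩



variable {κ : Cardinal.{u}}

lemma boundedTopology_basis (ι : Type u) [LinearOrder ι] [Nonempty ι] (A : Type v) :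
    @IsTopologicalBasis (ι → A) (BoundedTopology ι A)
      {U | ∃ (a : ι) (y : ι → A), U = {x : ι → A | ∀ b, b < a → x b = y b}} := by
  letI t := BoundedTopology ι A
  refine ⟨?_, ?_, rfl⟩
  · rintro t₁ ⟨a₁, y₁, rfl⟩ t₂ ⟨a₂, y₂, rfl⟩ x ⟨hx₁, hx₂⟩
    refine ⟨{z | ∀ b, b < max a₁ a₂ → z b = x b}, ⟨max a₁ a₂, x, rfl⟩,
      fun b _ => rfl, fun z hz => ⟨?_, ?_⟩⟩
    · intro b hb
      exact (hz b (hb.trans_le (le_max_left _ _))).trans (hx₁ b hb)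
    · intro b hb
      exact (hz b (hb.trans_le (le_max_right _ _))).trans (hx₂ b hb)
  · apply eq_univ_of_forall
    intro x
    obtain ⟨a⟩ := ‹Nonempty ι›
    exact ⟨{z | ∀ b, b < a → z b = x b}, ⟨a, x, rfl⟩, fun b _ => rfl⟩

lemma genBaire_basis (h : 0 < κ) :
    IsTopologicalBasis (α := GenBaire κ)
      {U | ∃ (a : κ.ord.ToType) (y : GenBaire κ),
        U = {x : GenBaire κ | ∀ b, b < a → x b = y b}} := by
  haveI := nonempty_toType h
  exact boundedTopology_basis κ.ord.ToType κ.ord.ToType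

lemma genCantor_basis (h : 0 < κ) :
    IsTopologicalBasis (α := GenCantor κ)
      {U | ∃ (a : κ.ord.ToType) (y : GenCantor κ),
        U = {x : GenCantor κ | ∀ b, b < a → x b = y b}} := by
  haveI := nonempty_toType h
  exact boundedTopology_basis κ.ord.ToType Bool

lemma kAdditive_boundedTopology (hreg : κ.IsRegular) (A : Type u) :
    @KAdditive κ (κ.ord.ToType → A) (BoundedTopology κ.ord.ToType A) := by
  haveI := nonempty_toType hreg.pos
  letI t := BoundedTopology κ.ord.ToType A
  have hb := boundedTopology_basis κ.ord.ToType A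
  intro 𝒮 hcard hopen
  rw [isOpen_iff_forall_mem_open]
  intro x hx
  have hsel : ∀ U : ↥𝒮, ∃ a : κ.ord.ToType,
      {z : κ.ord.ToType → A | ∀ b, b < a → z b = x b} ⊆ U.1 := by
    intro U
    obtain ⟨t', ⟨a, y, rfl⟩, hxt, htU⟩ :=
      hb.exists_subset_of_mem_open (hx U.1 U.2) (hopen U.1 U.2)
    exact ⟨a, fun z hz => htU (fun b hb' => (hz b hb').trans (hxt b hb'))⟩
  choose asel hsel using hsel
  obtain ⟨abound, habound⟩ := bounded_of_mk_lt hreg asel hcard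
  refine ⟨{z | ∀ b, b < abound → z b = x b}, ?_, hb.isOpen ⟨abound, x, rfl⟩, fun b _ => rfl⟩
  intro z hz
  rw [mem_sInter]
  intro U hU
  exact hsel ⟨U, hU⟩ (fun b hb' => hz b (hb'.trans_le (habound ⟨U, hU⟩)))

lemma kAdditive_boundedTopologyBool (hreg : κ.IsRegular) (A : Type) :
    @KAdditive κ (κ.ord.ToType → A) (BoundedTopology κ.ord.ToType A) := by
  haveI := nonempty_toType hreg.pos
  letI t := BoundedTopology κ.ord.ToType A
  have hb := boundedTopology_basis κ.ord.ToType A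
  intro 𝒮 hcard hopen
  rw [isOpen_iff_forall_mem_open]
  intro x hx
  have hsel : ∀ U : ↥𝒮, ∃ a : κ.ord.ToType,
      {z : κ.ord.ToType → A | ∀ b, b < a → z b = x b} ⊆ U.1 := by
    intro U
    obtain ⟨t', ⟨a, y, rfl⟩, hxt, htU⟩ :=
      hb.exists_subset_of_mem_open (hx U.1 U.2) (hopen U.1 U.2)
    exact ⟨a, fun z hz => htU (fun b hb' => (hz b hb').trans (hxt b hb'))⟩
  choose asel hsel using hsel
  obtain ⟨abound, habound⟩ := bounded_of_mk_lt hreg asel hcard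
  refine ⟨{z | ∀ b, b < abound → z b = x b}, ?_, hb.isOpen ⟨abound, x, rfl⟩, fun b _ => rfl⟩
  intro z hz
  rw [mem_sInter]
  intro U hU
  exact hsel ⟨U, hU⟩ (fun b hb' => hz b (hb'.trans_le (habound ⟨U, hU⟩)))

lemma kAdditive_genBaire (hreg : κ.IsRegular) : KAdditive κ (GenBaire κ) :=
  kAdditive_boundedTopology hreg κ.ord.ToType

lemma kAdditive_genCantor (hreg : κ.IsRegular) : KAdditive κ (GenCantor κ) :=
  kAdditive_boundedTopologyBool hreg Bool

lemma KAdditive.subtype {Y : Type u} [TopologicalSpace Y] (h : KAdditive κ Y) (S : Set Y) :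
    KAdditive κ ↥S := by
  intro 𝒮 hcard hopen
  have hsel : ∀ U : ↥𝒮, ∃ W : Set Y, IsOpen W ∧ Subtype.val ⁻¹' W = U.1 :=
    fun U => isOpen_induced_iff.mp (hopen U.1 U.2)
  choose W hWopen hWeq using hsel
  have heq : ⋂₀ 𝒮 = Subtype.val ⁻¹' (⋂₀ (range W)) := by
    rw [sInter_range, sInter_eq_iInter, preimage_iInter]
    exact iInter_congr fun U => (hWeq U).symm
  rw [heq]
  exact (h (range W) (lt_of_le_of_lt Cardinal.mk_range_le hcard)
    (by rintro _ ⟨U, rfl⟩; exact hWopen U)).preimage continuous_subtype_val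

lemma KAdditive.of_homeomorph {Y Z : Type u} [TopologicalSpace Y] [TopologicalSpace Z]
    (e : Y ≃ₜ Z) (h : KAdditive κ Z) : KAdditive κ Y := by
  intro 𝒮 hcard hopen
  have h1 : IsOpen (⋂₀ ((fun U => e.symm ⁻¹' U) '' 𝒮)) := by
    apply h
    · exact lt_of_le_of_lt Cardinal.mk_image_le hcard
    · rintro _ ⟨U, hU, rfl⟩
      exact (hopen U hU).preimage e.symm.continuous
  have h2 : ⋂₀ ((fun U => e.symm ⁻¹' U) '' 𝒮) = e.symm ⁻¹' (⋂₀ 𝒮) := by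
    rw [sInter_image, preimage_sInter]
  rw [h2] at h1
  have h3 : ⋂₀ 𝒮 = e ⁻¹' (e.symm ⁻¹' (⋂₀ 𝒮)) := by
    ext x
    simp
  rw [h3]
  exact h1.preimage e.continuous

lemma isOpen_coord_cantor (hunc : ℵ₀ < κ) (a : κ.ord.ToType) (v : Bool) :
    IsOpen {z : GenCantor κ | z a = v} := by
  have hpos : 0 < κ := aleph0_pos.trans hunc
  have hb := genCantor_basis (κ := κ) hpos
  rw [isOpen_iff_forall_mem_open]
  intro z hz
  obtain ⟨c, hc⟩ := exists_gt_toType hunc.le a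
  refine ⟨{w : GenCantor κ | ∀ b, b < c → w b = z b}, fun w hw => ?_,
    hb.isOpen ⟨c, z, rfl⟩, fun b _ => rfl⟩
  show w a = v
  rw [hw a hc]
  exact hz



variable {κ : Cardinal.{u}}

lemma mk_nat_arrow_le (hreg : κ.IsRegular) (hunc : ℵ₀ < κ)
    (hpow : (2 : Cardinal.{u}) ^< κ = κ) : #(ℕ → κ.ord.ToType) ≤ κ := by
  classical
  have haleph : #(ULift.{u} ℕ) = (ℵ₀ : Cardinal.{u}) := by
    rw [Cardinal.mk_uLift, Cardinal.mk_nat, Cardinal.lift_aleph0]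
  have hbdd : ∀ f : ℕ → κ.ord.ToType, ∃ a, ∀ n, f n ≤ a := by
    intro f
    obtain ⟨a, ha⟩ := bounded_of_mk_lt hreg (fun m : ULift.{u} ℕ => f m.down)
      (by rw [haleph]; exact hunc)
    exact ⟨a, fun n => ha ⟨n⟩⟩
  have hcov : (univ : Set (ℕ → κ.ord.ToType)) =
      ⋃ a : κ.ord.ToType, {f : ℕ → κ.ord.ToType | ∀ n, f n ≤ a} := by
    apply Subset.antisymm
    · intro f _
      obtain ⟨a, ha⟩ := hbdd f
      exact mem_iUnion.2 ⟨a, ha⟩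
    · exact subset_univ _
  have hpiece : ∀ a : κ.ord.ToType, #({f : ℕ → κ.ord.ToType | ∀ n, f n ≤ a}) ≤ κ := by
    intro a
    have h1 : #({f : ℕ → κ.ord.ToType | ∀ n, f n ≤ a}) ≤ #(ℕ → ↥(Iic a)) := by
      refine Cardinal.mk_le_of_injective
        (f := fun p => fun n => (⟨p.1 n, p.2 n⟩ : ↥(Iic a))) ?_
      intro p q hpq
      apply Subtype.ext
      funext n
      exact congrArg Subtype.val (congrFun hpq n)
    have h2 : #(ℕ → ↥(Iic a)) = #(↥(Iic a)) ^ (ℵ₀ : Cardinal.{u}) := by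
      rw [← haleph, Cardinal.power_def]
      exact mk_congr (Equiv.arrowCongr Equiv.ulift (Equiv.refl _)).symm
    have h3 : #(↥(Iic a)) ^ (ℵ₀ : Cardinal.{u}) ≤ κ := by
      calc #(↥(Iic a)) ^ (ℵ₀ : Cardinal.{u})
          ≤ (2 ^ #(↥(Iic a))) ^ (ℵ₀ : Cardinal.{u}) :=
            Cardinal.power_le_power_right (Cardinal.cantor _).le
        _ = 2 ^ (#(↥(Iic a)) * ℵ₀) := (Cardinal.power_mul).symm
        _ ≤ 2 ^< κ := Cardinal.le_powerlt 2
            (Cardinal.mul_lt_of_lt hunc.le (mk_Iic_lt hunc.le a) hunc)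
        _ = κ := hpow
    exact h1.trans (h2.le.trans h3)
  calc #(ℕ → κ.ord.ToType) = #(univ : Set (ℕ → κ.ord.ToType)) := Cardinal.mk_univ.symm
    _ = #(⋃ a : κ.ord.ToType, {f : ℕ → κ.ord.ToType | ∀ n, f n ≤ a}) := by rw [hcov]
    _ ≤ #(κ.ord.ToType) * ⨆ a, #({f : ℕ → κ.ord.ToType | ∀ n, f n ≤ a}) :=
        Cardinal.mk_iUnion_le _
    _ ≤ κ * κ := by
        refine mul_le_mul' (le_of_eq (mk_toType_eq κ)) (ciSup_le' hpiece)
    _ = κ := Cardinal.mul_eq_self hreg.aleph0_le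

lemma exists_clopen_basis {X : Type u} [TopologicalSpace X] [RegularSpace X]
    (hreg : κ.IsRegular) (hunc : ℵ₀ < κ) (hpow : (2 : Cardinal.{u}) ^< κ = κ)
    (hw : HasWeightLE κ X) (hadd : KAdditive κ X) :
    ∃ C : κ.ord.ToType → Set X, (∀ a, IsClopen (C a)) ∧
      IsTopologicalBasis (range C) := by
  classical
  obtain ⟨B, hB, hBcard⟩ := hw
  haveI hne := nonempty_toType hreg.pos
  rw [← mk_toType_eq κ, Cardinal.le_def] at hBcard
  obtain ⟨φ⟩ := hBcard
  set b : κ.ord.ToType → Set X := fun a =>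
    if h : ∃ W : ↥B, φ W = a then (h.choose : ↥B).1 else univ with hb
  have hbopen : ∀ a, IsOpen (b a) := by
    intro a
    rw [hb]
    dsimp only
    split
    · next h => exact hB.isOpen h.choose.2
    · exact isOpen_univ
  have hbsurj : ∀ W ∈ B, ∃ a, b a = W := by
    intro W hW
    refine ⟨φ ⟨W, hW⟩, ?_⟩
    have hex : ∃ t : ↥B, φ t = φ ⟨W, hW⟩ := ⟨⟨W, hW⟩, rfl⟩
    rw [hb]
    dsimp only
    rw [dif_pos hex]
    have h2 := φ.injective hex.choose_spec
    rw [h2]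
  set Fc : Set (Set X) := {A | ∃ s : ℕ → κ.ord.ToType,
      (∀ n, closure (b (s (n+1))) ⊆ b (s n)) ∧ A = ⋂ n, b (s n)} with hFc
  set F : Set (Set X) := insert Set.univ Fc with hF
  have hFclopen : ∀ A ∈ F, IsClopen A := by
    rintro A (rfl | ⟨s, hs, rfl⟩)
    · exact isClopen_univ
    constructor
    · have heq : ⋂ n, b (s n) = ⋂ n, closure (b (s (n+1))) := by
        apply Subset.antisymm
        · intro x hx
          exact mem_iInter.2 fun n => subset_closure (mem_iInter.1 hx (n+1))
        · intro x hx
          exact mem_iInter.2 fun n => hs n (mem_iInter.1 hx n)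
      rw [heq]
      exact isClosed_iInter fun n => isClosed_closure
    · have heq : ⋂ n, b (s n) = ⋂₀ (range fun n => b (s n)) := (sInter_range _).symm
      rw [heq]
      apply hadd
      · haveI := (countable_range fun n => b (s n)).to_subtype
        exact lt_of_le_of_lt Cardinal.mk_le_aleph0 hunc
      · rintro _ ⟨n, rfl⟩
        exact hbopen _
  have hFbasis : IsTopologicalBasis F := by
    apply isTopologicalBasis_of_isOpen_of_nhds
    · intro u hu
      exact (hFclopen u hu).2
    · intro x U hxU hU
      obtain ⟨W0, hW0B, hxW0, hW0U⟩ := hB.exists_subset_of_mem_open hxU hU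
      obtain ⟨a0, ha0⟩ := hbsurj W0 hW0B
      have step : ∀ a : {a : κ.ord.ToType // x ∈ b a},
          ∃ a' : {a : κ.ord.ToType // x ∈ b a}, closure (b a'.1) ⊆ b a.1 := by
        rintro ⟨a, hxa⟩
        obtain ⟨s', hs'_nhds, hs'_closed, hsub⟩ :=
          exists_mem_nhds_isClosed_subset ((hbopen a).mem_nhds hxa)
        have hxint : x ∈ interior s' := mem_interior_iff_mem_nhds.2 hs'_nhds
        obtain ⟨W, hWB, hxW, hWs⟩ := hB.exists_subset_of_mem_open hxint isOpen_interior
        obtain ⟨a', ha'⟩ := hbsurj W hWB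
        refine ⟨⟨a', by rw [ha']; exact hxW⟩, ?_⟩
        rw [ha']
        exact (closure_minimal (hWs.trans interior_subset) hs'_closed).trans hsub
      let f : ℕ → {a : κ.ord.ToType // x ∈ b a} :=
        fun n => Nat.rec (motive := fun _ => {a : κ.ord.ToType // x ∈ b a}) (⟨a0, by rw [ha0]; exact hxW0⟩ : {a : κ.ord.ToType // x ∈ b a})
          (fun _ p => (step p).choose) n
      have hfchain : ∀ n, closure (b ((f (n+1)).1)) ⊆ b ((f n).1) :=
        fun n => (step (f n)).choose_spec
      have hf0 : (f 0).1 = a0 := rfl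
      refine ⟨⋂ n, b ((f n).1), mem_insert_of_mem _ ⟨fun n => (f n).1, hfchain, rfl⟩,
        mem_iInter.2 fun n => (f n).2, ?_⟩
      have h0 : (⋂ n, b ((f n).1)) ⊆ b ((f 0).1) := iInter_subset _ 0
      rw [hf0, ha0] at h0
      exact h0.trans hW0U
  have hκ1 : (1 : Cardinal.{u}) ≤ κ := (one_lt_aleph0.trans hunc).le
  have hFcard : #F ≤ κ := by
    have h1 : Fc = (fun s : ℕ → κ.ord.ToType => ⋂ n, b (s n)) ''
        {s | ∀ n, closure (b (s (n+1))) ⊆ b (s n)} := by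
      ext A
      constructor
      · rintro ⟨s, hs, rfl⟩
        exact ⟨s, hs, rfl⟩
      · rintro ⟨s, hs, rfl⟩
        exact ⟨s, hs, rfl⟩
    have h2 : #Fc ≤ κ := by
      rw [h1]
      calc #((fun s : ℕ → κ.ord.ToType => ⋂ n, b (s n)) ''
            {s | ∀ n, closure (b (s (n+1))) ⊆ b (s n)})
          ≤ #({s : ℕ → κ.ord.ToType | ∀ n, closure (b (s (n+1))) ⊆ b (s n)}) :=
            Cardinal.mk_image_le
        _ ≤ #(ℕ → κ.ord.ToType) := Cardinal.mk_set_le _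
        _ ≤ κ := mk_nat_arrow_le hreg hunc hpow
    have h3 : #F ≤ #Fc + 1 := by
      rw [hF]
      exact Cardinal.mk_insert_le
    calc #F ≤ #Fc + 1 := h3
      _ ≤ κ + κ := add_le_add h2 hκ1
      _ = κ := Cardinal.add_eq_self hreg.aleph0_le
  rw [← mk_toType_eq κ, Cardinal.le_def] at hFcard
  obtain ⟨ψ⟩ := hFcard
  set C : κ.ord.ToType → Set X := fun a =>
    if h : ∃ v : ↥F, ψ v = a then (h.choose : ↥F).1 else univ with hC
  have hCF : ∀ a, C a ∈ F := by
    intro a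
    rw [hC]
    dsimp only
    split
    · next h => exact h.choose.2
    · rw [hF]
      exact mem_insert _ _
  have hCsurj : ∀ v ∈ F, ∃ a, C a = v := by
    intro v hv
    refine ⟨ψ ⟨v, hv⟩, ?_⟩
    have hex : ∃ t : ↥F, ψ t = ψ ⟨v, hv⟩ := ⟨⟨v, hv⟩, rfl⟩
    rw [hC]
    dsimp only
    rw [dif_pos hex]
    have h2 := ψ.injective hex.choose_spec
    rw [h2]
  have hrange : range C = F := by
    apply Subset.antisymm
    · rintro _ ⟨a, rfl⟩
      exact hCF a
    · intro v hv
      obtain ⟨a, ha⟩ := hCsurj v hv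
      exact ⟨a, ha⟩
  refine ⟨C, fun a => hFclopen _ (hCF a), ?_⟩
  rw [hrange]
  exact hFbasis



variable {κ : Cardinal.{u}}

lemma KAdditive.of_gMetrizable {X : Type u} [t : TopologicalSpace X]
    {G : Type u} [AddCommGroup G] [LinearOrder G] [IsOrderedAddMonoid G] (hG : HasDegree G κ) (hκ0 : 0 < κ)
    (hm : GMetrizable G X) : KAdditive κ X := by
  classical
  obtain ⟨d, hd, hcompat⟩ := hm
  have hdxx : ∀ x : X, d x x = 0 := fun x => (hd.eq_zero_iff x x).2 rfl
  set gens : Set (Set X) := {V | ∃ x ε', 0 < ε' ∧ V = GBall d x ε'} with hgens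
  have hball : ∀ U, TopologicalSpace.GenerateOpen gens U →
      ∀ x ∈ U, ∃ δ : G, 0 < δ ∧ GBall d x δ ⊆ U := by
    intro U hU
    induction hU with
    | basic V hV =>
        intro x hx
        obtain ⟨y, ε', hε', rfl⟩ := hV
        refine ⟨ε' - d y x, sub_pos.2 hx, fun z hz => ?_⟩
        show d y z < ε'
        calc d y z ≤ d y x + d x z := hd.triangle y x z
          _ < d y x + (ε' - d y x) := add_lt_add_right hz _
          _ = ε' := by abel
    | univ =>
        intro x _
        obtain ⟨δ, hδ⟩ := hG.exists_pos hκ0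
        exact ⟨δ, hδ, subset_univ _⟩
    | inter U V hU hV ihU ihV =>
        intro x hx
        obtain ⟨δ1, h1, hs1⟩ := ihU x hx.1
        obtain ⟨δ2, h2, hs2⟩ := ihV x hx.2
        exact ⟨min δ1 δ2, lt_min h1 h2, fun z hz =>
          ⟨hs1 (lt_of_lt_of_le hz (min_le_left _ _)),
           hs2 (lt_of_lt_of_le hz (min_le_right _ _))⟩⟩
    | sUnion S hS ih =>
        intro x hx
        obtain ⟨U, hUS, hxU⟩ := hx
        obtain ⟨δ, hδ, hsub⟩ := ih U hUS x hxU
        exact ⟨δ, hδ, hsub.trans (subset_sUnion_of_mem hUS)⟩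
  intro 𝒮 hcard hopen
  have hopen' : ∀ U ∈ 𝒮, TopologicalSpace.GenerateOpen gens U := by
    intro U hU
    have h := hopen U hU
    rw [← hcompat] at h
    exact h
  -- choose radii
  have hsel : ∀ x : X, x ∈ ⋂₀ 𝒮 → ∀ U : ↥𝒮, ∃ δ : G, 0 < δ ∧ GBall d x δ ⊆ U.1 :=
    fun x hx U => hball U.1 (hopen' U.1 U.2) x (hx U.1 U.2)
  have hrad : ∀ x : X, x ∈ ⋂₀ 𝒮 → ∃ δ : G, 0 < δ ∧ GBall d x δ ⊆ ⋂₀ 𝒮 := by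
    intro x hx
    choose δ hδpos hδsub using hsel x hx
    have hTpos : ∀ g ∈ range δ, (0:G) < g := by
      rintro _ ⟨U, rfl⟩
      exact hδpos U
    obtain ⟨η, hη, hηle⟩ := hG.lower_bound hTpos
      (lt_of_le_of_lt Cardinal.mk_range_le hcard)
    refine ⟨η, hη, fun z hz => ?_⟩
    rw [mem_sInter]
    intro U hU
    exact hδsub ⟨U, hU⟩ (lt_of_lt_of_le hz (hηle _ ⟨⟨U, hU⟩, rfl⟩))
  rw [← hcompat]
  show TopologicalSpace.GenerateOpen gens (⋂₀ 𝒮)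
  choose! δ hδpos hδsub using hrad
  have hcov : ⋂₀ 𝒮 = ⋃₀ {B | ∃ x ∈ ⋂₀ 𝒮, B = GBall d x (δ x)} := by
    apply Subset.antisymm
    · intro x hx
      exact ⟨GBall d x (δ x), ⟨x, hx, rfl⟩, by show d x x < δ x; rw [hdxx]; exact hδpos x hx⟩
    · rintro z ⟨_, ⟨x, hx, rfl⟩, hz⟩
      exact hδsub x hx hz
  rw [hcov]
  exact TopologicalSpace.GenerateOpen.sUnion _ (by
    rintro _ ⟨x, hx, rfl⟩
    exact TopologicalSpace.GenerateOpen.basic _ ⟨x, δ x, hδpos x hx, rfl⟩)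

lemma gmetric_of_clopen_basis {X : Type u} [t : TopologicalSpace X] [T2Space X]
    {G : Type u} [AddCommGroup G] [LinearOrder G] [IsOrderedAddMonoid G]
    (hreg : κ.IsRegular) (hunc : ℵ₀ < κ)
    (C : κ.ord.ToType → Set X) (hCclopen : ∀ a, IsClopen (C a))
    (hCbasis : IsTopologicalBasis (range C)) (hadd : KAdditive κ X)
    (ε : κ.ord.ToType → G) (hεpos : ∀ a, 0 < ε a) (hεanti : StrictAnti ε)
    (hεcoin : ∀ δ : G, 0 < δ → ∃ a, ε a ≤ δ) :
    GMetrizable G X := by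
  classical
  have wf : WellFounded ((· < ·) : κ.ord.ToType → κ.ord.ToType → Prop) := wellFounded_lt
  set D : X → X → Set κ.ord.ToType := fun x y => {a | ¬ (x ∈ C a ↔ y ∈ C a)} with hD
  have hDsymm : ∀ x y, D x y = D y x := by
    intro x y
    ext a
    rw [hD]
    simp only [mem_setOf_eq]
    exact not_congr iff_comm
  have hDne : ∀ x y, x ≠ y → (D x y).Nonempty := by
    intro x y hxy
    have hopen : IsOpen ({y}ᶜ : Set X) := isOpen_compl_singleton
    obtain ⟨V, ⟨a, rfl⟩, hxV, hVsub⟩ :=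
      hCbasis.exists_subset_of_mem_open (by simpa using hxy) hopen
    refine ⟨a, ?_⟩
    intro hiff
    exact hVsub (hiff.1 hxV) rfl
  have hDempty : ∀ x : X, ¬ (D x x).Nonempty := by
    rintro x ⟨a, ha⟩
    exact ha Iff.rfl
  set d : X → X → G := fun x y => if h : (D x y).Nonempty then ε (wf.min (D x y) h) else 0
    with hd
  have hd_eq : ∀ x y (h : (D x y).Nonempty), d x y = ε (wf.min (D x y) h) := by
    intro x y h
    rw [hd]
    exact dif_pos h
  have hd_self : ∀ x, d x x = 0 := by
    intro x
    rw [hd]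
    exact dif_neg (hDempty x)
  have hmin_mem : ∀ x y (h : (D x y).Nonempty), wf.min (D x y) h ∈ D x y :=
    fun x y h => wf.min_mem _ h
  have hagree : ∀ x y (h : (D x y).Nonempty) b, b < wf.min (D x y) h →
      (x ∈ C b ↔ y ∈ C b) := by
    intro x y h b hb
    by_contra hc
    exact wf.not_lt_min (D x y) hc hb
  have hmin_congr : ∀ (s s' : Set κ.ord.ToType) (h : s.Nonempty) (h' : s'.Nonempty),
      s = s' → wf.min s h = wf.min s' h' := by
    rintro s s' h h' rfl
    rfl
  have hnonneg : ∀ x y, 0 ≤ d x y := by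
    intro x y
    rw [hd]
    dsimp only
    split
    · exact (hεpos _).le
    · exact le_refl 0
  have hpos_ne : ∀ x y, x ≠ y → 0 < d x y := by
    intro x y hxy
    rw [hd_eq x y (hDne x y hxy)]
    exact hεpos _
  have hsymm : ∀ x y, d x y = d y x := by
    intro x y
    rcases eq_or_ne x y with rfl | hxy
    · rfl
    · rw [hd_eq x y (hDne x y hxy), hd_eq y x (hDne y x hxy.symm)]
      exact congrArg ε (hmin_congr _ _ _ _ (hDsymm x y))
  have hultra : ∀ x y z, d x z ≤ max (d x y) (d y z) := by
    intro x y z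
    rcases eq_or_ne x z with rfl | hxz
    · rw [hd_self]
      exact le_max_of_le_left (hnonneg x y)
    rcases eq_or_ne x y with rfl | hxy
    · exact le_max_of_le_right (le_refl _)
    rcases eq_or_ne y z with rfl | hyz
    · exact le_max_of_le_left (le_refl _)
    have hxz' := hDne x z hxz
    have hxy' := hDne x y hxy
    have hyz' := hDne y z hyz
    set mxy := wf.min (D x y) hxy'
    set myz := wf.min (D y z) hyz'
    set mxz := wf.min (D x z) hxz'
    have hkey : min mxy myz ≤ mxz := by
      by_contra hc
      push_neg at hc
      have h1 : x ∈ C mxz ↔ y ∈ C mxz :=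
        hagree x y hxy' mxz (lt_of_lt_of_le hc (min_le_left _ _))
      have h2 : y ∈ C mxz ↔ z ∈ C mxz :=
        hagree y z hyz' mxz (lt_of_lt_of_le hc (min_le_right _ _))
      exact (hmin_mem x z hxz') (h1.trans h2)
    rw [hd_eq x z hxz', hd_eq x y hxy', hd_eq y z hyz']
    calc ε mxz ≤ ε (min mxy myz) := hεanti.antitone hkey
      _ ≤ max (ε mxy) (ε myz) := by
          rcases le_total mxy myz with h | h
          · rw [min_eq_left h]
            exact le_max_left _ _
          · rw [min_eq_right h]
            exact le_max_right _ _
  have hmetric : IsGMetric d := by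
    refine ⟨hnonneg, ?_, hsymm, ?_⟩
    · intro x y
      constructor
      · intro h0
        by_contra hxy
        exact absurd h0 (ne_of_gt (hpos_ne x y hxy))
      · rintro rfl
        exact hd_self x
    · intro x y z
      refine (hultra x y z).trans (max_le ?_ ?_)
      · exact le_add_of_nonneg_right (hnonneg y z)
      · exact le_add_of_nonneg_left (hnonneg x y)
  -- key: if d x z < ε a then x,z agree on C b for all b ≤ a
  have hagree_le : ∀ (x z : X) (a b : κ.ord.ToType), d x z < ε a → b ≤ a →
      (x ∈ C b ↔ z ∈ C b) := by
    intro x z a b hlt hba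
    rcases eq_or_ne x z with rfl | hxz
    · exact Iff.rfl
    have h := hDne x z hxz
    rw [hd_eq x z h] at hlt
    have hmlt : a < wf.min (D x z) h := by
      by_contra hc
      push_neg at hc
      exact absurd hlt (not_lt.mpr (hεanti.antitone hc))
    exact hagree x z h b (lt_of_le_of_lt hba hmlt)
  refine ⟨d, hmetric, ?_⟩
  apply le_antisymm
  · -- GMetricTopology d ≤ t
    rw [hCbasis.eq_generateFrom]
    apply le_generateFrom_iff_subset_isOpen.mpr
    rintro _ ⟨a, rfl⟩
    show TopologicalSpace.GenerateOpen _ (C a)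
    have hcov : C a = ⋃₀ {B | ∃ x ∈ C a, B = GBall d x (ε a)} := by
      apply Subset.antisymm
      · intro x hx
        refine ⟨GBall d x (ε a), ⟨x, hx, rfl⟩, ?_⟩
        show d x x < ε a
        rw [hd_self]
        exact hεpos a
      · rintro z ⟨_, ⟨x, hx, rfl⟩, hz⟩
        exact (hagree_le x z a a hz (le_refl a)).1 hx
    rw [hcov]
    exact TopologicalSpace.GenerateOpen.sUnion _ (by
      rintro _ ⟨x, hx, rfl⟩
      exact TopologicalSpace.GenerateOpen.basic _ ⟨x, ε a, hεpos a, rfl⟩)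
  · -- t ≤ GMetricTopology d
    apply le_generateFrom
    rintro _ ⟨x, δ, hδ, rfl⟩
    rw [isOpen_iff_forall_mem_open]
    intro y hy
    obtain ⟨a, ha⟩ := hεcoin δ hδ
    set A : Set X := ⋂ p : ↥(Iic a), (if y ∈ C p.1 then C p.1 else (C p.1)ᶜ) with hA
    have hAopen : IsOpen A := by
      have heq : A = ⋂₀ (range fun p : ↥(Iic a) => if y ∈ C p.1 then C p.1 else (C p.1)ᶜ) :=
        (sInter_range _).symm
      rw [heq]
      apply hadd
      · exact lt_of_le_of_lt Cardinal.mk_range_le (mk_Iic_lt hunc.le a)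
      · rintro _ ⟨p, rfl⟩
        dsimp only
        split
        · exact (hCclopen p.1).2
        · exact (hCclopen p.1).compl.2
    have hyA : y ∈ A := by
      rw [hA]
      refine mem_iInter.2 fun p => ?_
      split
      · next h => exact h
      · next h => exact h
    refine ⟨A, fun z hz => ?_, hAopen, hyA⟩
    show d x z < δ
    have hyzagree : ∀ b, b ≤ a → (y ∈ C b ↔ z ∈ C b) := by
      intro b hb
      have hz' := mem_iInter.1 hz ⟨b, hb⟩
      dsimp only at hz'
      by_cases hyb : y ∈ C b
      · rw [if_pos hyb] at hz'
        exact ⟨fun _ => hz', fun _ => hyb⟩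
      · rw [if_neg hyb] at hz'
        exact ⟨fun h => absurd h hyb, fun h => absurd h hz'⟩
    have hdyz : d y z < δ := by
      rcases eq_or_ne y z with rfl | hyz
      · rw [hd_self]
        exact lt_of_lt_of_le (hεpos a) ha
      have h := hDne y z hyz
      rw [hd_eq y z h]
      have hmlt : a < wf.min (D y z) h := by
        by_contra hc
        push_neg at hc
        exact (hmin_mem y z h) (hyzagree _ hc)
      exact lt_of_lt_of_le (hεanti hmlt) ha
    exact lt_of_le_of_lt (hultra x y z) (max_lt hy hdyz)



variable {κ : Cardinal.{u}}

lemma exists_cantor_embedding {X : Type u} [t : TopologicalSpace X] [T2Space X]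
    (hreg : κ.IsRegular) (hunc : ℵ₀ < κ)
    (C : κ.ord.ToType → Set X) (hCclopen : ∀ a, IsClopen (C a))
    (hCbasis : IsTopologicalBasis (range C)) (hadd : KAdditive κ X) :
    ∃ S : Set (GenCantor κ), Nonempty (X ≃ₜ ↥S) := by
  classical
  set e : X → GenCantor κ := fun x a => if x ∈ C a then true else false with he
  have hmem : ∀ x a, e x a = true ↔ x ∈ C a := by
    intro x a
    rw [he]
    dsimp only
    split
    · next h => simpa using h
    · next h => simpa using h
  have hmem' : ∀ x a, e x a = false ↔ x ∉ C a := by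
    intro x a
    rw [he]
    dsimp only
    split
    · next h => simpa using h
    · next h => simpa using h
  have hinj : Function.Injective e := by
    intro x y hxy
    by_contra hne
    obtain ⟨V, ⟨a, rfl⟩, hxV, hVsub⟩ :=
      hCbasis.exists_subset_of_mem_open
        (show x ∈ ({y}ᶜ : Set X) by simpa using hne) isOpen_compl_singleton
    have h1 : e x a = true := (hmem x a).2 hxV
    have h2 : e y a = true := by rw [← hxy]; exact h1
    exact hVsub ((hmem y a).1 h2) rfl
  have hbc := genCantor_basis (κ := κ) hreg.pos
  have hcont : Continuous e := by
    rw [hbc.continuous_iff]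
    rintro _ ⟨a, y, rfl⟩
    have heq : e ⁻¹' {z : GenCantor κ | ∀ b, b < a → z b = y b}
        = ⋂₀ (range fun p : ↥(Iio a) => {x : X | e x p.1 = y p.1}) := by
      rw [sInter_range]
      ext x
      simp only [mem_preimage, mem_setOf_eq, mem_iInter]
      constructor
      · intro h p
        exact h p.1 p.2
      · intro h b hb
        exact h ⟨b, hb⟩
    rw [heq]
    apply hadd
    · exact lt_of_le_of_lt Cardinal.mk_range_le (mk_Iio_lt a)
    · rintro _ ⟨p, rfl⟩
      dsimp only
      cases hb : y p.1
      · have hset : {x : X | e x p.1 = false} = (C p.1)ᶜ := by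
          ext x
          rw [mem_setOf_eq, mem_compl_iff]
          exact hmem' x p.1
        rw [hset]
        exact (hCclopen _).compl.2
      · have hset : {x : X | e x p.1 = true} = C p.1 := by
          ext x
          rw [mem_setOf_eq]
          exact hmem x p.1
        rw [hset]
        exact (hCclopen _).2
  have hemb : IsEmbedding e := by
    refine ⟨⟨?_⟩, hinj⟩
    apply le_antisymm
    · exact continuous_iff_le_induced.mp hcont
    · rw [hCbasis.eq_generateFrom]
      apply le_generateFrom_iff_subset_isOpen.mpr
      rintro _ ⟨a, rfl⟩
      rw [mem_setOf_eq, isOpen_induced_iff]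
      refine ⟨{z : GenCantor κ | z a = true}, isOpen_coord_cantor hunc a true, ?_⟩
      ext x
      simp only [mem_preimage, mem_setOf_eq]
      exact hmem x a
  exact ⟨range e, ⟨hemb.toHomeomorph⟩⟩

lemma exists_baire_of_cantor (hunc : ℵ₀ < κ) {X : Type u} [TopologicalSpace X]
    (h : ∃ S : Set (GenCantor κ), Nonempty (X ≃ₜ ↥S)) :
    ∃ S : Set (GenBaire κ), Nonempty (X ≃ₜ ↥S) := by
  classical
  obtain ⟨S, ⟨h0⟩⟩ := h
  have hnt : Nontrivial κ.ord.ToType := by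
    rw [← Cardinal.one_lt_iff_nontrivial, mk_toType_eq]
    exact one_lt_aleph0.trans hunc
  obtain ⟨i0, i1, hi⟩ := exists_pair_ne κ.ord.ToType
  set j : Bool → κ.ord.ToType := fun v => if v then i1 else i0 with hj
  have hjinj : Function.Injective j := by
    intro u v huv
    cases u <;> cases v
    · rfl
    · exact absurd (show i0 = i1 from by simpa [hj] using huv) hi
    · exact absurd (show i0 = i1 from by simpa [hj] using huv.symm) hi
    · rfl
  set J : GenCantor κ → GenBaire κ := fun w b => j (w b) with hJ
  have hJinj : Function.Injective J := fun w w' hww' =>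
    funext fun b => hjinj (congrFun hww' b)
  have hbc := genCantor_basis (κ := κ) (aleph0_pos.trans hunc)
  have hbb := genBaire_basis (κ := κ) (aleph0_pos.trans hunc)
  have hpoint : ∀ (vb : Bool) (c : κ.ord.ToType), c ∈ range j →
      (j vb = c ↔ vb = (if c = i1 then true else false)) := by
    rintro vb _ ⟨v, rfl⟩
    cases v <;> cases vb <;> simp [hj, hi, hi.symm]
  have hJcont : Continuous J := by
    rw [hbb.continuous_iff]
    rintro _ ⟨a, y, rfl⟩
    by_cases hcase : ∀ b, b < a → y b ∈ range j
    · have heq : J ⁻¹' {z : GenBaire κ | ∀ b, b < a → z b = y b}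
          = {w : GenCantor κ | ∀ b, b < a →
              w b = (if y b = i1 then true else false)} := by
        ext w
        simp only [mem_preimage, mem_setOf_eq]
        constructor
        · intro hw b hb
          exact (hpoint (w b) (y b) (hcase b hb)).1 (hw b hb)
        · intro hw b hb
          exact (hpoint (w b) (y b) (hcase b hb)).2 (hw b hb)
      rw [heq]
      exact hbc.isOpen ⟨a, (fun b => if y b = i1 then true else false), rfl⟩
    · push_neg at hcase
      obtain ⟨b, hb, hynot⟩ := hcase
      have heq : J ⁻¹' {z : GenBaire κ | ∀ b, b < a → z b = y b} = ∅ := by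
        ext w
        simp only [mem_preimage, mem_setOf_eq, mem_empty_iff_false, iff_false]
        intro hw
        exact hynot ⟨w b, hw b hb⟩
      rw [heq]
      exact isOpen_empty
  have hJemb : IsEmbedding J := by
    refine ⟨⟨?_⟩, hJinj⟩
    apply le_antisymm
    · exact continuous_iff_le_induced.mp hJcont
    · rw [hbc.eq_generateFrom]
      apply le_generateFrom_iff_subset_isOpen.mpr
      rintro _ ⟨a, y, rfl⟩
      rw [mem_setOf_eq, isOpen_induced_iff]
      refine ⟨{z : GenBaire κ | ∀ b, b < a → z b = J y b},
        hbb.isOpen ⟨a, J y, rfl⟩, ?_⟩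
      ext w
      simp only [mem_preimage, mem_setOf_eq]
      constructor
      · intro hw b hb
        exact hjinj (hw b hb)
      · intro hw b hb
        rw [hJ]
        dsimp only
        rw [hw b hb]
  have hgemb : IsEmbedding ((J ∘ (Subtype.val : ↥S → GenCantor κ)) ∘ ⇑h0) :=
    (hJemb.comp IsEmbedding.subtypeVal).comp h0.isEmbedding
  exact ⟨range ((J ∘ (Subtype.val : ↥S → GenCantor κ)) ∘ ⇑h0),
    ⟨hgemb.toHomeomorph⟩⟩



/-- Sikorski: for a regular Hausdorff space of weight ≤ κ,
κ-additivity ↔ 𝔾-metrizability ↔ embeddability into 2^κ ↔ embeddability into κ^κ. -/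
theorem stmt_3 (κ : Cardinal.{u}) (hreg : κ.IsRegular) (hunc : ℵ₀ < κ)
    (hpow : (2 : Cardinal.{u}) ^< κ = κ)
    (G : Type u) [AddCommGroup G] [LinearOrder G] [IsOrderedAddMonoid G] (hG : HasDegree G κ)
    (X : Type u) [TopologicalSpace X] [T2Space X] [RegularSpace X]
    (hw : HasWeightLE κ X) :
    (KAdditive κ X ↔ GMetrizable G X) ∧
    (KAdditive κ X ↔ ∃ S : Set (GenCantor κ), Nonempty (X ≃ₜ ↥S)) ∧
    (KAdditive κ X ↔ ∃ S : Set (GenBaire κ), Nonempty (X ≃ₜ ↥S)) := by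
  have hforward : KAdditive κ X →
      (GMetrizable G X ∧ (∃ S : Set (GenCantor κ), Nonempty (X ≃ₜ ↥S))) := by
    intro hadd
    obtain ⟨C, hCclopen, hCbasis⟩ := exists_clopen_basis hreg hunc hpow hw hadd
    obtain ⟨ε, hεpos, hεanti, hεcoin⟩ := exists_strictAnti_coinitial hreg hunc hG
    exact ⟨gmetric_of_clopen_basis hreg hunc C hCclopen hCbasis hadd ε hεpos hεanti hεcoin,
      exists_cantor_embedding hreg hunc C hCclopen hCbasis hadd⟩
  have hback_baire : (∃ S : Set (GenBaire κ), Nonempty (X ≃ₜ ↥S)) → KAdditive κ X := by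
    rintro ⟨S, ⟨h0⟩⟩
    exact KAdditive.of_homeomorph h0 ((kAdditive_genBaire hreg).subtype S)
  have hback_cantor : (∃ S : Set (GenCantor κ), Nonempty (X ≃ₜ ↥S)) → KAdditive κ X := by
    rintro ⟨S, ⟨h0⟩⟩
    exact KAdditive.of_homeomorph h0 ((kAdditive_genCantor hreg).subtype S)
  exact ⟨⟨fun h => (hforward h).1, fun hm => KAdditive.of_gMetrizable hG hreg.pos hm⟩,
    ⟨fun h => (hforward h).2, hback_cantor⟩,
    ⟨fun h => exists_baire_of_cantor hunc (hforward h).2, hback_baire⟩⟩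



end GDST
end
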